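/- arXiv:1609.00595 — 2 statements merged into one kernel-verified Lean document; each statement's English description precedes it below -/
import Mathlib

section
/- Let P be a rooted finite poset, Q a finite poset, and K a field. If every proper poset cycle in Q of length ≥ 6 admits a chord, then the ideal J_{P,Q} is generated by quadratic binomials. -/
open MvPolynomial

/-- The `K`-algebra map sending the variable `t_φ` (indexed by an isotone map
`φ : P →o Q`) to the monomial `∏_{p ∈ P} x_{p, φ(p)}`. -/
noncomputable def isotonianMap (K P Q : Type) [Field K] [PartialOrder P] [Fintype P]
    [PartialOrder Q] [Fintype Q] :
    MvPolynomial (P →o Q) K →ₐ[K] MvPolynomial (P × Q) K :=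
  aeval fun φ : P →o Q => ∏ p : P, X (p, φ p)

/-- The defining ideal `J_{P,Q}` of the isotonian algebra `K[P,Q]`. -/
noncomputable def isotonianIdeal (K P Q : Type) [Field K] [PartialOrder P] [Fintype P]
    [PartialOrder Q] [Fintype Q] :
    Ideal (MvPolynomial (P →o Q) K) :=
  RingHom.ker (isotonianMap K P Q)

/-- A binomial `monomial u 1 - monomial v 1` which is quadratic: both monomials have degree 2. -/
def IsQuadraticBinomial {σ K : Type} [Field K] (f : MvPolynomial σ K) : Prop :=
  ∃ u v : σ →₀ ℕ, (u.sum fun _ e => e) = 2 ∧ (v.sum fun _ e => e) = 2 ∧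
    f = monomial u 1 - monomial v 1

/-- `q 0, q 1, …, q (2*m-1)` is a poset cycle of length `2*m` in `Q` (0-based version of
`q₁ ≤ q₂ ≥ q₃ ≤ ⋯ ≤ q_{2m} ≥ q₁`): every even-indexed element is below both of its cyclic
neighbors. -/
def IsPosetCycle {Q : Type} [PartialOrder Q] (m : ℕ) (q : ℕ → Q) : Prop :=
  ∀ i < m, q (2 * i) ≤ q (2 * i + 1) ∧ q (2 * i) ≤ q ((2 * i + 2 * m - 1) % (2 * m))

/-- The poset cycle `q 0, …, q (2*m-1)` has a chord: some even-indexed (0-based) element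
is below an odd-indexed element which is not one of its two cyclic neighbors. -/
def HasChord {Q : Type} [PartialOrder Q] (m : ℕ) (q : ℕ → Q) : Prop :=
  ∃ i < m, ∃ j < m, j ≠ i ∧ 2 * j + 1 ≠ (2 * i + 2 * m - 1) % (2 * m) ∧
    q (2 * i) ≤ q (2 * j + 1)

/-- The poset cycle `q 0, …, q (2*m-1)` is proper: its elements are pairwise distinct, the
even-indexed (0-based) elements are pairwise incomparable, and so are the odd-indexed ones. -/
def IsProperPosetCycle {Q : Type} [PartialOrder Q] (m : ℕ) (q : ℕ → Q) : Prop :=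
  (∀ i < 2 * m, ∀ j < 2 * m, i ≠ j → q i ≠ q j) ∧
  (∀ i < m, ∀ j < m, i ≠ j → ¬ q (2 * i) ≤ q (2 * j)) ∧
  (∀ i < m, ∀ j < m, i ≠ j → ¬ q (2 * i + 1) ≤ q (2 * j + 1))

section Chord
variable {Q : Type} [PartialOrder Q]

/-- chord for a cyclic pattern `v i ≤ w i`, `v i ≤ w ((i+1)%m)`. -/
def ChordP (m : ℕ) (v w : ℕ → Q) : Prop :=
  ∃ a, a < m ∧ ∃ b, b < m ∧ b ≠ a ∧ b ≠ (a + 1) % m ∧ v a ≤ w b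

lemma two_step_ne {m x : ℕ} (hm3 : 3 ≤ m) (hx : x < m) : ((x + 1) % m + 1) % m ≠ x := by
  intro h
  rw [Nat.mod_add_mod] at h
  have hxx : x % m = x := Nat.mod_eq_of_lt hx
  have : (x + 1 + 1) % m = x % m := by rw [h, hxx]
  have h2 : x ≡ x + 1 + 1 [MOD m] := by
    unfold Nat.ModEq; rw [this]
  have := (Nat.modEq_iff_dvd' (by omega)).1 h2
  have := Nat.le_of_dvd (by omega) this
  omega

lemma succ_mod_ne {m x : ℕ} (hm2 : 2 ≤ m) (hx : x < m) : (x + 1) % m ≠ x := by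
  rcases Nat.lt_or_ge (x + 1) m with h | h
  · rw [Nat.mod_eq_of_lt h]; omega
  · have : x + 1 = m := by omega
    rw [this, Nat.mod_self]; omega

lemma R_lt {m : ℕ} (hm : 0 < m) (i : ℕ) : (m - i) % m < m := Nat.mod_lt _ hm

lemma R_R {m i : ℕ} (hm : 0 < m) (hi : i < m) : (m - (m - i) % m) % m = i := by
  rcases Nat.eq_zero_or_pos i with h | h
  · subst h; simp
  · have h1 : m - i < m := by omega
    rw [Nat.mod_eq_of_lt h1]
    have : m - (m - i) = i := by omega
    rw [this, Nat.mod_eq_of_lt hi]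

lemma R_inj {m i j : ℕ} (hm : 0 < m) (hi : i < m) (hj : j < m)
    (h : (m - i) % m = (m - j) % m) : i = j := by
  have := R_R hm hi
  rw [h, R_R hm hj] at this; omega

variable {m : ℕ} {v w : ℕ → Q}

lemma chord_of_vv (hm3 : 3 ≤ m) (hX : ∀ i < m, v i ≤ w i) (hY : ∀ i < m, v i ≤ w ((i + 1) % m))
    {α β : ℕ} (hα : α < m) (hβ : β < m) (hne : α ≠ β) (h : v α ≤ v β) : ChordP m v w := by
  by_cases h1 : β = (α + 1) % m
  · refine ⟨α, hα, (β + 1) % m, Nat.mod_lt _ (by omega), ?_, ?_, h.trans (hY β hβ)⟩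
    · intro hc
      exact two_step_ne hm3 hα (by rw [← h1, hc])
    · rw [← h1]; exact succ_mod_ne (by omega) hβ
  · exact ⟨α, hα, β, hβ, hne.symm, h1, h.trans (hX β hβ)⟩

lemma chord_of_ww (hm3 : 3 ≤ m) (hX : ∀ i < m, v i ≤ w i) (hY : ∀ i < m, v i ≤ w ((i + 1) % m))
    {α β : ℕ} (hα : α < m) (hβ : β < m) (hne : α ≠ β) (h : w α ≤ w β) : ChordP m v w := by
  by_cases h1 : β = (α + 1) % m
  · -- use predecessor of α
    set α' := if α = 0 then m - 1 else α - 1 with hα'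
    have hα'lt : α' < m := by rw [hα']; split <;> omega
    have hsucc : (α' + 1) % m = α := by
      rw [hα']; split
    --
      · next hz => subst hz; have : m - 1 + 1 = m := by omega
                   rw [this, Nat.mod_self]
      · next hz => have : α - 1 + 1 = α := by omega
                   rw [this, Nat.mod_eq_of_lt hα]
    refine ⟨α', hα'lt, β, hβ, ?_, by rw [hsucc]; exact hne.symm, ?_⟩
    · intro hc
      -- β = α' and β = (α+1)%m and α = (α'+1)%m  ⇒ two_step at α... α = ((α+1)%m + 1)%m
      apply two_step_ne hm3 hα (x := α)
      rw [← h1, hc, hsucc]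
    · calc v α' ≤ w ((α' + 1) % m) := hY α' hα'lt
        _ = w α := by rw [hsucc]
        _ ≤ w β := h
  · exact ⟨α, hα, β, hβ, hne.symm, h1, (hX α hα).trans h⟩

lemma chord_of_veqw (hm3 : 3 ≤ m) (hX : ∀ i < m, v i ≤ w i) (hY : ∀ i < m, v i ≤ w ((i + 1) % m))
    {α β : ℕ} (hα : α < m) (hβ : β < m) (h : v α = w β) : ChordP m v w := by
  by_cases h1 : β = α
  · -- w α = v α ≤ w ((α+1)%m)
    subst h1
    exact chord_of_ww hm3 hX hY hβ (Nat.mod_lt _ (by omega))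
      (Ne.symm (succ_mod_ne (by omega) hβ)) (h ▸ hY β hβ)
  · by_cases h2 : β = (α + 1) % m
    · -- w β = v α ≤ w α
      exact chord_of_ww hm3 hX hY hβ hα h1 (h ▸ hX α hα)
    · exact ⟨α, hα, β, hβ, h1, h2, le_of_eq h⟩

lemma chord_exists
    (hQ : ∀ m : ℕ, 3 ≤ m → ∀ q : ℕ → Q, IsPosetCycle m q → IsProperPosetCycle m q →
      HasChord m q)
    (hm3 : 3 ≤ m) (hX : ∀ i < m, v i ≤ w i) (hY : ∀ i < m, v i ≤ w ((i + 1) % m)) :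
    ChordP m v w := by
  have hm : 0 < m := by omega
  set q : ℕ → Q := fun j => if j % 2 = 0 then v ((m - j / 2) % m) else w ((m - j / 2) % m)
    with hq
  have qe : ∀ i, q (2 * i) = v ((m - i) % m) := by
    intro i; rw [hq]; simp only
    have h1 : 2 * i % 2 = 0 := by omega
    have h2 : 2 * i / 2 = i := by omega
    rw [if_pos h1, h2]
  have qo : ∀ i, q (2 * i + 1) = w ((m - i) % m) := by
    intro i; rw [hq]; simp only
    have h1 : ¬ (2 * i + 1) % 2 = 0 := by omega
    have h2 : (2 * i + 1) / 2 = i := by omega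
    rw [if_neg h1, h2]
  -- the backward neighbour index
  have hback : ∀ i, 1 ≤ i → i < m → (2 * i + 2 * m - 1) % (2 * m) = 2 * (i - 1) + 1 := by
    intro i h1 h2
    have e : 2 * i + 2 * m - 1 = (2 * (i - 1) + 1) + 2 * m := by omega
    rw [e, Nat.add_mod_right, Nat.mod_eq_of_lt (by omega)]
  have hback0 : (2 * 0 + 2 * m - 1) % (2 * m) = 2 * (m - 1) + 1 := by
    have e : 2 * 0 + 2 * m - 1 = 2 * (m - 1) + 1 := by omega
    rw [e, Nat.mod_eq_of_lt (by omega)]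
  have hcyc : IsPosetCycle m q := by
    intro i hi
    constructor
    · rw [qe, qo]; exact hX _ (R_lt hm i)
    · rcases Nat.eq_zero_or_pos i with h0 | h0
      · subst h0
        rw [hback0, qe, qo]
        have e0 : (m - 0) % m = 0 := by simp
        have e1 : (m - (m - 1)) % m = 1 % m := by
          have : m - (m - 1) = 1 := by omega
          rw [this]
        rw [e0, e1]
        have := hY 0 hm
        simpa using this
      · rw [hback i h0 hi, qe, qo]
        have e0 : (m - i) % m = m - i := Nat.mod_eq_of_lt (by omega)
        have e1 : (m - (i - 1)) % m = ((m - i) + 1) % m := by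
          congr 1; omega
        rw [e0, e1]
        exact hY (m - i) (by omega)
  by_cases hprop : IsProperPosetCycle m q
  · obtain ⟨i, hi, j, hj, hji, hnb, hle⟩ := hQ m hm3 q hcyc hprop
    rw [qe, qo] at hle
    refine ⟨(m - i) % m, R_lt hm i, (m - j) % m, R_lt hm j, ?_, ?_, hle⟩
    · intro hc; exact hji (R_inj hm hj hi hc)
    · -- suppose (m-j)%m = ((m-i)%m + 1) % m ; derive contradiction with hnb
      intro hc
      apply hnb
      rcases Nat.eq_zero_or_pos i with h0 | h0
      · subst h0
        -- (m-j)%m = (0+1)%m = 1 ⇒ j = m-1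
        have e0 : (m - 0) % m = 0 := by simp
        rw [e0] at hc
        have e1 : (0 + 1) % m = 1 := Nat.mod_eq_of_lt (by omega)
        rw [e1] at hc
        have hj' : j = m - 1 := by
          rcases Nat.eq_zero_or_pos j with hz | hz
          · exfalso; subst hz; rw [Nat.sub_zero, Nat.mod_self] at hc; omega
          · have : (m - j) % m = m - j := Nat.mod_eq_of_lt (by omega)
            omega
        rw [hback0, hj']
      · have e0 : (m - i) % m = m - i := Nat.mod_eq_of_lt (by omega)
        rw [e0] at hc
        rw [hback i h0 hi]
        rcases Nat.lt_or_ge i 2 with h2 | h2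
        · -- i = 1 : (m-i+1)%m = 0 ⇒ j = 0
          have hi1 : i = 1 := by omega
          subst hi1
          have e1 : (m - 1 + 1) % m = 0 := by
            have : m - 1 + 1 = m := by omega
            rw [this, Nat.mod_self]
          rw [e1] at hc
          have hj0 : j = 0 := by
            rcases Nat.eq_zero_or_pos j with hz | hz
            · exact hz
            · exfalso
              have : (m - j) % m = m - j := Nat.mod_eq_of_lt (by omega)
              omega
          rw [hj0]
        · -- i ≥ 2 : (m-i+1)%m = m-i+1 ⇒ j = i-1
          have e1 : (m - i + 1) % m = m - i + 1 := Nat.mod_eq_of_lt (by omega)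
          rw [e1] at hc
          have hj' : j = i - 1 := by
            rcases Nat.eq_zero_or_pos j with hz | hz
            · exfalso; subst hz; rw [Nat.sub_zero, Nat.mod_self] at hc; omega
            · have : (m - j) % m = m - j := Nat.mod_eq_of_lt (by omega)
              omega
          rw [hj']
  · -- improper case
    by_cases hA : (∀ i < 2 * m, ∀ j < 2 * m, i ≠ j → q i ≠ q j)
    · by_cases hB : (∀ i < m, ∀ j < m, i ≠ j → ¬ q (2 * i) ≤ q (2 * j))
      · have hC : ¬ (∀ i < m, ∀ j < m, i ≠ j → ¬ q (2 * i + 1) ≤ q (2 * j + 1)) :=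
          fun hC => hprop ⟨hA, hB, hC⟩
        push_neg at hC
        obtain ⟨i, hi, j, hj, hij, hle⟩ := hC
        rw [qo, qo] at hle
        exact chord_of_ww hm3 hX hY (R_lt hm i) (R_lt hm j)
          (fun hc => hij (R_inj hm hi hj hc)) hle
      · push_neg at hB
        obtain ⟨i, hi, j, hj, hij, hle⟩ := hB
        rw [qe, qe] at hle
        exact chord_of_vv hm3 hX hY (R_lt hm i) (R_lt hm j)
          (fun hc => hij (R_inj hm hi hj hc)) hle
    · push_neg at hA
      obtain ⟨i, hi, j, hj, hij, heq⟩ := hA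
      have hi2 : i / 2 < m := by omega
      have hj2 : j / 2 < m := by omega
      rcases Nat.mod_two_eq_zero_or_one i with hpi | hpi <;>
        rcases Nat.mod_two_eq_zero_or_one j with hpj | hpj
      · have ei : i = 2 * (i / 2) := by omega
        have ej : j = 2 * (j / 2) := by omega
        rw [ei, ej, qe, qe] at heq
        have hne : (i / 2) ≠ (j / 2) := by omega
        exact chord_of_vv hm3 hX hY (R_lt hm _) (R_lt hm _)
          (fun hc => hne (R_inj hm hi2 hj2 hc)) (le_of_eq heq)
      · have ei : i = 2 * (i / 2) := by omega
        have ej : j = 2 * (j / 2) + 1 := by omega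
        rw [ei, ej, qe, qo] at heq
        exact chord_of_veqw hm3 hX hY (R_lt hm _) (R_lt hm _) heq
      · have ei : i = 2 * (i / 2) + 1 := by omega
        have ej : j = 2 * (j / 2) := by omega
        rw [ei, ej, qo, qe] at heq
        exact chord_of_veqw hm3 hX hY (R_lt hm _) (R_lt hm _) heq.symm
      · have ei : i = 2 * (i / 2) + 1 := by omega
        have ej : j = 2 * (j / 2) + 1 := by omega
        rw [ei, ej, qo, qo] at heq
        have hne : (i / 2) ≠ (j / 2) := by omega
        exact chord_of_ww hm3 hX hY (R_lt hm _) (R_lt hm _)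
          (fun hc => hne (R_inj hm hi2 hj2 hc)) (le_of_eq heq)

section Matching
variable {Q : Type} [PartialOrder Q] {r : ℕ}

/-- One exchange move on a matching state. -/
def MStep (s s' : Fin r → Q × Q) : Prop :=
  ∃ i j : Fin r, i ≠ j ∧ (s i).1 ≤ (s j).2 ∧ (s j).1 ≤ (s i).2 ∧
    s' = Function.update (Function.update s i ((s i).1, (s j).2)) j ((s j).1, (s i).2)

lemma MStep.fst_eq {s s' : Fin r → Q × Q} (h : MStep s s') : ∀ k, (s' k).1 = (s k).1 := by
  obtain ⟨i, j, hij, h1, h2, rfl⟩ := h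
  intro k
  rcases eq_or_ne k j with rfl | hkj
  · rw [Function.update_self]
  · rw [Function.update_of_ne hkj]
    rcases eq_or_ne k i with rfl | hki
    · rw [Function.update_self]
    · rw [Function.update_of_ne hki]

lemma MStep.valid {s s' : Fin r → Q × Q} (h : MStep s s')
    (hv : ∀ k, (s k).1 ≤ (s k).2) : ∀ k, (s' k).1 ≤ (s' k).2 := by
  obtain ⟨i, j, hij, h1, h2, rfl⟩ := h
  intro k
  rcases eq_or_ne k j with rfl | hkj
  · rw [Function.update_self]; exact h2
  · rw [Function.update_of_ne hkj]
    rcases eq_or_ne k i with rfl | hki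
    · rw [Function.update_self]; exact h1
    · rw [Function.update_of_ne hki]; exact hv k

lemma univ_val_cons_cons {i j : Fin r} (hij : i ≠ j) :
    (Finset.univ.val : Multiset (Fin r)) =
      i ::ₘ j ::ₘ ((Finset.univ.val.erase i).erase j) := by
  classical
  have hi : i ∈ (Finset.univ.val : Multiset (Fin r)) := Finset.mem_univ_val i
  have hj : j ∈ (Finset.univ.val : Multiset (Fin r)).erase i := by
    rw [(Finset.univ.nodup).mem_erase_iff]
    exact ⟨hij.symm, Finset.mem_univ_val j⟩
  rw [Multiset.cons_erase hj, Multiset.cons_erase hi]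

lemma mem_erase_erase {i j k : Fin r}
    (hk : k ∈ (Finset.univ.val.erase i).erase j) : k ≠ i ∧ k ≠ j := by
  classical
  have h1 := (((Finset.univ.nodup).erase i).mem_erase_iff).1 hk
  have h2 := ((Finset.univ.nodup).mem_erase_iff).1 h1.2
  exact ⟨h2.1, h1.1⟩

lemma map_update2 {α : Type} (f : Fin r → α) {i j : Fin r} (hij : i ≠ j) (a b : α) :
    Multiset.map (Function.update (Function.update f i a) j b) Finset.univ.val
      = a ::ₘ b ::ₘ Multiset.map f ((Finset.univ.val.erase i).erase j) := by
  classical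
  set R := (Finset.univ.val.erase i).erase j with hR
  have hu : (Finset.univ.val : Multiset (Fin r)) = i ::ₘ j ::ₘ R := univ_val_cons_cons hij
  rw [hu, Multiset.map_cons, Multiset.map_cons]
  congr 1
  · rw [Function.update_of_ne hij, Function.update_self]
  congr 1
  · rw [Function.update_self]
  · refine Multiset.map_congr rfl fun k hk => ?_
    obtain ⟨h1, h2⟩ := mem_erase_erase (hR ▸ hk)
    rw [Function.update_of_ne h2, Function.update_of_ne h1]

lemma map_self2 {α : Type} (f : Fin r → α) {i j : Fin r} (hij : i ≠ j) :
    Multiset.map f Finset.univ.val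
      = f i ::ₘ f j ::ₘ Multiset.map f ((Finset.univ.val.erase i).erase j) := by
  set R := (Finset.univ.val.erase i).erase j with hR
  have hu : (Finset.univ.val : Multiset (Fin r)) = i ::ₘ j ::ₘ R := univ_val_cons_cons hij
  rw [hu, Multiset.map_cons, Multiset.map_cons]

lemma MStep.snd_multiset {s s' : Fin r → Q × Q} (h : MStep s s') :
    Multiset.map (fun k => (s' k).2) Finset.univ.val
      = Multiset.map (fun k => (s k).2) Finset.univ.val := by
  classical
  obtain ⟨i, j, hij, h1, h2, rfl⟩ := h
  have e1 : (fun k => ((Function.update (Function.update s i ((s i).1, (s j).2)) j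
      ((s j).1, (s i).2)) k).2) = Function.update (Function.update (fun k => (s k).2) i
      ((s j).2)) j ((s i).2) := by
    funext k
    rcases eq_or_ne k j with rfl | hkj
    · rw [Function.update_self, Function.update_self]
    · rw [Function.update_of_ne hkj, Function.update_of_ne hkj]
      rcases eq_or_ne k i with rfl | hki
      · rw [Function.update_self, Function.update_self]
      · rw [Function.update_of_ne hki, Function.update_of_ne hki]
  rw [e1, map_update2 _ hij, map_self2 (fun k => (s k).2) hij]
  rw [Multiset.cons_swap]

lemma MReach.fst_eq {s s' : Fin r → Q × Q} (h : Relation.ReflTransGen MStep s s') :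
    ∀ k, (s' k).1 = (s k).1 := by
  induction h with
  | refl => exact fun k => rfl
  | tail _ hstep ih => exact fun k => (hstep.fst_eq k).trans (ih k)

lemma MReach.valid {s s' : Fin r → Q × Q} (h : Relation.ReflTransGen MStep s s')
    (hv : ∀ k, (s k).1 ≤ (s k).2) : ∀ k, (s' k).1 ≤ (s' k).2 := by
  induction h with
  | refl => exact hv
  | tail _ hstep ih => exact hstep.valid ih

lemma MReach.snd_multiset {s s' : Fin r → Q × Q} (h : Relation.ReflTransGen MStep s s') :
    Multiset.map (fun k => (s' k).2) Finset.univ.val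
      = Multiset.map (fun k => (s k).2) Finset.univ.val := by
  induction h with
  | refl => rfl
  | tail _ hstep ih => exact hstep.snd_multiset.trans ih

/-- extraction of a permutation from equality of multisets of values -/
lemma exists_perm_comp {α : Type} {n : ℕ} (u v : Fin n → α)
    (h : Multiset.map u Finset.univ.val = Multiset.map v Finset.univ.val) :
    ∃ σ : Equiv.Perm (Fin n), ∀ k, u (σ k) = v k := by
  classical
  have hcard : ∀ a : α, Fintype.card {i // v i = a} = Fintype.card {i // u i = a} := by
    intro a
    rw [Fintype.card_subtype, Fintype.card_subtype]
    have hu : (Finset.filter (fun i => u i = a) Finset.univ).card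
        = Multiset.count a (Multiset.map u Finset.univ.val) := by
      rw [Multiset.count_map]
      rw [Finset.card_filter]
      simp [Finset.sum_ite_eq, eq_comm]
      rfl
    have hv : (Finset.filter (fun i => v i = a) Finset.univ).card
        = Multiset.count a (Multiset.map v Finset.univ.val) := by
      rw [Multiset.count_map]
      rw [Finset.card_filter]
      simp [eq_comm]
      rfl
    rw [hu, hv, h]
  let e : ∀ a : α, {i // v i = a} ≃ {i // u i = a} := fun a => Fintype.equivOfCardEq (hcard a)
  refine ⟨(Equiv.sigmaFiberEquiv v).symm.trans
    ((Equiv.sigmaCongrRight e).trans (Equiv.sigmaFiberEquiv u)), fun k => ?_⟩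
  exact ((e (v k)) ⟨k, rfl⟩).prop

end Matching

section CycleLemma
variable {Q : Type} [PartialOrder Q]

/-- Rotating the right components along an alternating cycle is achievable by exchange
moves. -/
lemma cycleL
    (hQ : ∀ m : ℕ, 3 ≤ m → ∀ q : ℕ → Q, IsPosetCycle m q → IsProperPosetCycle m q →
      HasChord m q) :
    ∀ m : ℕ, 2 ≤ m → ∀ {r : ℕ} (s : Fin r → Q × Q) (ℓ : ℕ → Fin r),
      (∀ i, ℓ (i % m) = ℓ i) →
      (∀ i < m, ∀ j < m, ℓ i = ℓ j → i = j) →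
      (∀ k, (s k).1 ≤ (s k).2) →
      (∀ i < m, (s (ℓ i)).1 ≤ (s (ℓ (i + 1))).2) →
      ∃ s', Relation.ReflTransGen MStep s s' ∧ (∀ k, (s' k).1 = (s k).1) ∧
        (∀ i < m, (s' (ℓ i)).2 = (s (ℓ (i + 1))).2) ∧
        (∀ k, (∀ i < m, ℓ i ≠ k) → s' k = s k) := by
  intro m
  induction m using Nat.strong_induction_on with
  | _ m IH =>
  intro hm2 r s ℓ hper hinj hval hY
  rcases eq_or_lt_of_le hm2 with hm | hm3'
  · -- base case m = 2
    subst hm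
    have h01 : ℓ 0 ≠ ℓ 1 := fun h => by have := hinj 0 (by omega) 1 (by omega) h; omega
    have hY0 : (s (ℓ 0)).1 ≤ (s (ℓ 1)).2 := hY 0 (by omega)
    have hℓ2 : ℓ 2 = ℓ 0 := by
      have := hper 2; norm_num at this; exact this.symm
    have hY1 : (s (ℓ 1)).1 ≤ (s (ℓ 0)).2 := by
      have := hY 1 (by omega); rwa [hℓ2] at this
    set s' := Function.update (Function.update s (ℓ 0) ((s (ℓ 0)).1, (s (ℓ 1)).2)) (ℓ 1)
      ((s (ℓ 1)).1, (s (ℓ 0)).2) with hs'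
    have hstep : MStep s s' := ⟨ℓ 0, ℓ 1, h01, hY0, hY1, hs'⟩
    refine ⟨s', Relation.ReflTransGen.single hstep, hstep.fst_eq, ?_, ?_⟩
    · intro i hi
      interval_cases i
      · rw [hs', Function.update_of_ne h01, Function.update_self]
      · rw [hs', Function.update_self, hℓ2]
    · intro k hk
      have hk0 : ℓ 0 ≠ k := hk 0 (by omega)
      have hk1 : ℓ 1 ≠ k := hk 1 (by omega)
      rw [hs', Function.update_of_ne (Ne.symm hk1), Function.update_of_ne (Ne.symm hk0)]
  · -- inductive step : m ≥ 3
    have hm3 : 3 ≤ m := hm3'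
    have hm0 : 0 < m := by omega
    -- find a chord
    obtain ⟨a, ha, b, hb, hba, hbnot, hchord⟩ :=
      chord_exists (v := fun i => (s (ℓ i)).1) (w := fun i => (s (ℓ i)).2) hQ hm3
        (fun i _ => hval _)
        (fun i hi => by
          have h1 := hY i hi
          have h2 : ℓ ((i + 1) % m) = ℓ (i + 1) := hper (i + 1)
          show (s (ℓ i)).1 ≤ (s (ℓ ((i + 1) % m))).2
          rw [h2]; exact h1)
    -- rotated cycle
    set ℓt : ℕ → Fin r := fun i => ℓ ((i + a) % m) with hℓt
    have hpert : ∀ i, ℓt (i % m) = ℓt i := by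
      intro i; rw [hℓt]; simp only
      rw [Nat.mod_add_mod]
    have hℓtlt : ∀ i, (i + a) % m < m := fun i => Nat.mod_lt _ hm0
    have hinjt : ∀ i < m, ∀ j < m, ℓt i = ℓt j → i = j := by
      intro i hi j hj hij
      have := hinj _ (hℓtlt i) _ (hℓtlt j) hij
      have h2 : i % m = j % m := by
        have : (i + a) ≡ (j + a) [MOD m] := by
          unfold Nat.ModEq; rw [this]
        exact Nat.ModEq.add_right_cancel' a this
      rwa [Nat.mod_eq_of_lt hi, Nat.mod_eq_of_lt hj] at h2
    have hYt : ∀ i < m, (s (ℓt i)).1 ≤ (s (ℓt (i + 1))).2 := by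
      intro i hi
      have h1 := hY ((i + a) % m) (Nat.mod_lt _ hm0)
      have h2 : ℓ ((i + a) % m + 1) = ℓt (i + 1) := by
        rw [← hper ((i + a) % m + 1), Nat.mod_add_mod, hℓt]
        simp only
        have e : i + a + 1 = i + 1 + a := by omega
        rw [e]
      rwa [h2] at h1
    -- chord in rotated coordinates
    set n := (b + m - a) % m with hn
    have hnm : n < m := Nat.mod_lt _ hm0
    have hab : (n + a) % m = b := by
      rw [hn, Nat.mod_add_mod]
      have e : b + m - a + a = b + m := by omega
      rw [e, Nat.add_mod_right, Nat.mod_eq_of_lt hb]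
    have hn0 : n ≠ 0 := by
      intro h
      rw [h, Nat.zero_add, Nat.mod_eq_of_lt ha] at hab
      exact hba hab.symm
    have hn1 : n ≠ 1 := by
      intro h
      rw [h] at hab
      have : (1 + a) % m = (a + 1) % m := by rw [Nat.add_comm]
      rw [this] at hab
      exact hbnot hab.symm
    have hn2 : 2 ≤ n := by omega
    have hchordt : (s (ℓt 0)).1 ≤ (s (ℓt n)).2 := by
      have e0 : ℓt 0 = ℓ a := by
        rw [hℓt]; simp only; rw [Nat.zero_add, Nat.mod_eq_of_lt ha]
      have e1 : ℓt n = ℓ b := by rw [hℓt]; simp only; rw [hab]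
      rw [e0, e1]; exact hchord
    -- phase A cycle
    set m1 := m - n + 1 with hm1
    have hm1lt : m1 < m := by omega
    have hm1ge : 2 ≤ m1 := by omega
    set ℓA : ℕ → Fin r := fun k => if k % m1 = 0 then ℓt 0 else ℓt (n + k % m1 - 1) with hℓA
    have hperA : ∀ i, ℓA (i % m1) = ℓA i := by
      intro i; rw [hℓA]; simp only
      rw [Nat.mod_mod_of_dvd _ dvd_rfl]
    have hAval : ∀ k < m1, k ≠ 0 → ℓA k = ℓt (n + k - 1) := by
      intro k hk hk0
      rw [hℓA]; simp only
      rw [Nat.mod_eq_of_lt hk, if_neg hk0]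
    have hA0 : ℓA 0 = ℓt 0 := by simp [hℓA]
    -- indices n+k-1 for 1 ≤ k < m1 lie in [n, m-1]
    have hinjA : ∀ i < m1, ∀ j < m1, ℓA i = ℓA j → i = j := by
      intro i hi j hj hij
      by_cases hi0 : i = 0 <;> by_cases hj0 : j = 0
      · rw [hi0, hj0]
      · rw [hi0, hA0, hAval j hj hj0] at hij
        have := hinjt 0 hm0 (n + j - 1) (by omega) hij
        omega
      · rw [hj0, hA0, hAval i hi hi0] at hij
        have := hinjt (n + i - 1) (by omega) 0 hm0 hij
        omega
      · rw [hAval i hi hi0, hAval j hj hj0] at hij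
        have := hinjt (n + i - 1) (by omega) (n + j - 1) (by omega) hij
        omega
    have hYA : ∀ i < m1, (s (ℓA i)).1 ≤ (s (ℓA (i + 1))).2 := by
      intro i hi
      by_cases hi0 : i = 0
      · subst hi0
        have e1 : ℓA 1 = ℓt n := hAval 1 (by omega) (by omega)
        rw [hA0, e1]
        exact hchordt
      · by_cases hilast : i + 1 = m1
        · have e0 : ℓA i = ℓt (m - 1) := by
            rw [hAval i hi hi0]; congr 1; omega
          have e1 : ℓA (i + 1) = ℓt 0 := by rw [hilast, ← hperA m1, Nat.mod_self, hA0]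
          rw [e0, e1]
          have h1 := hYt (m - 1) (by omega)
          have h2 : ℓt (m - 1 + 1) = ℓt 0 := by
            have e : m - 1 + 1 = m := by omega
            rw [e, ← hpert m, Nat.mod_self]
          rwa [h2] at h1
        · have e0 : ℓA i = ℓt (n + i - 1) := hAval i hi hi0
          have e1 : ℓA (i + 1) = ℓt (n + i) := hAval (i + 1) (by omega) (by omega)
          rw [e0, e1]
          have h1 := hYt (n + i - 1) (by omega)
          have h2 : n + i - 1 + 1 = n + i := by omega
          rwa [h2] at h1
    obtain ⟨s₁, hR1, hfst1, hmain1, hoff1⟩ := IH m1 hm1lt hm1ge s ℓA hperA hinjA hval hYA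
    have hval1 : ∀ k, (s₁ k).1 ≤ (s₁ k).2 := MReach.valid hR1 hval
    -- membership facts : ℓt x for x ∈ [1, n-1] is untouched by phase A
    have hoffA : ∀ x, 1 ≤ x → x < n → s₁ (ℓt x) = s (ℓt x) := by
      intro x h1 h2
      apply hoff1
      intro i hi hcon
      by_cases hi0 : i = 0
      · rw [hi0, hA0] at hcon
        have := hinjt 0 hm0 x (by omega) hcon
        omega
      · rw [hAval i hi hi0] at hcon
        have := hinjt (n + i - 1) (by omega) x (by omega) hcon
        omega
    -- phase B cycle
    set ℓB : ℕ → Fin r := fun k => ℓt (k % n) with hℓB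
    have hperB : ∀ i, ℓB (i % n) = ℓB i := by
      intro i; rw [hℓB]; simp only
      rw [Nat.mod_mod_of_dvd _ dvd_rfl]
    have hBval : ∀ k < n, ℓB k = ℓt k := by
      intro k hk; rw [hℓB]; simp only; rw [Nat.mod_eq_of_lt hk]
    have hinjB : ∀ i < n, ∀ j < n, ℓB i = ℓB j → i = j := by
      intro i hi j hj hij
      rw [hBval i hi, hBval j hj] at hij
      exact hinjt i (by omega) j (by omega) hij
    have hYB : ∀ i < n, (s₁ (ℓB i)).1 ≤ (s₁ (ℓB (i + 1))).2 := by
      intro i hi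
      rw [hBval i hi]
      rw [hfst1 (ℓt i)]
      by_cases hilast : i + 1 = n
      · have e1 : ℓB (i + 1) = ℓt 0 := by rw [hilast, ← hperB n, Nat.mod_self, hBval 0 (by omega)]
        rw [e1, hA0.symm, hmain1 0 (by omega)]
        have e2 : ℓA 1 = ℓt n := hAval 1 (by omega) (by omega)
        rw [e2]
        have h1 := hYt i (by omega)
        have h2 : i + 1 = n := hilast
        rw [h2] at h1
        exact h1
      · have e1 : ℓB (i + 1) = ℓt (i + 1) := hBval (i + 1) (by omega)
        rw [e1, hoffA (i + 1) (by omega) (by omega)]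
        exact hYt i (by omega)
    obtain ⟨s₂, hR2, hfst2, hmain2, hoff2⟩ := IH n (by omega) hn2 s₁ ℓB hperB hinjB hval1 hYB
    -- untouched-by-B fact for indices in [n, m-1] and the (rotated) main computation
    have hoffB : ∀ x, n ≤ x → x < m → s₂ (ℓt x) = s₁ (ℓt x) := by
      intro x h1 h2
      apply hoff2
      intro i hi hcon
      rw [hBval i hi] at hcon
      have := hinjt i (by omega) x (by omega) hcon
      omega
    have hmaint : ∀ i < m, (s₂ (ℓt i)).2 = (s (ℓt (i + 1))).2 := by
      intro i hi
      by_cases hc1 : i < n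
      · -- in phase B range
        rw [← hBval i hc1, hmain2 i hc1]
        by_cases hilast : i + 1 = n
        · rw [← hperB (i + 1), hilast, Nat.mod_self, hBval 0 (by omega), ← hA0,
            hmain1 0 (by omega)]
          have e2 : ℓA 1 = ℓt n := hAval 1 (by omega) (by omega)
          rw [e2]
        · rw [hBval (i + 1) (by omega), hoffA (i + 1) (by omega) (by omega)]
      · -- in phase A range
        push_neg at hc1
        rw [hoffB i hc1 hi]
        have hidx : ℓt i = ℓA (i - n + 1) := by
          rw [hAval (i - n + 1) (by omega) (by omega)]
          congr 1; omega
        rw [hidx, hmain1 (i - n + 1) (by omega)]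
        by_cases hilast : i = m - 1
        · have e1 : ℓA (i - n + 1 + 1) = ℓt 0 := by
            have e : i - n + 1 + 1 = m1 := by omega
            rw [e, ← hperA m1, Nat.mod_self, hA0]
          rw [e1]
          have e2 : ℓt (i + 1) = ℓt 0 := by
            have e : i + 1 = m := by omega
            rw [e, ← hpert m, Nat.mod_self]
          rw [e2]
        · have e1 : ℓA (i - n + 1 + 1) = ℓt (i + 1) := by
            rw [hAval (i - n + 1 + 1) (by omega) (by omega)]
            congr 1; omega
          rw [e1]
    refine ⟨s₂, hR1.trans hR2, fun k => (hfst2 k).trans (hfst1 k), ?_, ?_⟩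
    · -- translate back from ℓt to ℓ
      intro i hi
      set i' := (i + (m - a)) % m with hi'
      have hi'lt : i' < m := Nat.mod_lt _ hm0
      have e0 : ℓt i' = ℓ i := by
        rw [hℓt]; simp only
        rw [hi', Nat.mod_add_mod]
        have e : i + (m - a) + a = i + m := by omega
        rw [e, Nat.add_mod_right]
        exact hper i
      have e1 : ℓt (i' + 1) = ℓ (i + 1) := by
        rw [hℓt]; simp only
        have h3 : i' + 1 + a = i' + (1 + a) := by omega
        rw [h3, hi', Nat.mod_add_mod]
        have e : i + (m - a) + (1 + a) = (i + 1) + m := by omega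
        rw [e, Nat.add_mod_right]
        exact hper (i + 1)
      rw [← e0, ← e1]
      exact hmaint i' hi'lt
    · intro k hk
      have hkt : ∀ i < m, ℓt i ≠ k := fun i hi => hk _ (hℓtlt i)
      have h2 : s₂ k = s₁ k := by
        apply hoff2
        intro i hi
        rw [hBval i hi]
        exact hkt i (by omega)
      have h1 : s₁ k = s k := by
        apply hoff1
        intro i hi
        by_cases hi0 : i = 0
        · rw [hi0, hA0]; exact hkt 0 hm0
        · rw [hAval i hi hi0]; exact hkt (n + i - 1) (by omega)
      rw [h2, h1]

end CycleLemma

section MatchConnect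
open scoped Classical
variable {Q : Type} [PartialOrder Q]

lemma matchConnectAux
    (hQ : ∀ m : ℕ, 3 ≤ m → ∀ q : ℕ → Q, IsPosetCycle m q → IsProperPosetCycle m q →
      HasChord m q) :
    ∀ (N : ℕ) {r : ℕ} (s t : Fin r → Q × Q),
      (Finset.univ.filter fun k => s k ≠ t k).card ≤ N →
      (∀ k, (s k).1 = (t k).1) →
      (∀ k, (s k).1 ≤ (s k).2) →
      (∀ k, (t k).1 ≤ (t k).2) →
      Multiset.map (fun k => (s k).2) Finset.univ.val
        = Multiset.map (fun k => (t k).2) Finset.univ.val →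
      Relation.ReflTransGen MStep s t := by
  classical
  intro N
  induction N with
  | zero =>
    intro r s t hcard _ _ _ _
    have : ∀ k, s k = t k := by
      intro k
      by_contra hk
      have : k ∈ Finset.univ.filter fun k => s k ≠ t k := by
        simp [hk]
      have := Finset.card_pos.2 ⟨k, this⟩
      omega
    have : s = t := funext this
    rw [this]
  | succ N IHN =>
    intro r s t hcard hfst hsval htval hsnd
    by_cases hst : s = t
    · rw [hst]
    · obtain ⟨k₀, hk₀⟩ := Function.ne_iff.1 hst
      obtain ⟨π, hπ⟩ := exists_perm_comp (fun k => (s k).2) (fun k => (t k).2) hsnd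
      have hπk₀ : π k₀ ≠ k₀ := by
        intro h
        apply hk₀
        have h2 : (s k₀).2 = (t k₀).2 := by rw [← hπ k₀, h]
        exact Prod.ext (hfst k₀) h2
      set F := ⇑π with hF
      have hFinj : Function.Injective F := π.injective
      have hper : k₀ ∈ Function.periodicPts F := by
        rw [Function.mem_periodicPts]
        refine ⟨orderOf π, orderOf_pos π, ?_⟩
        show F^[orderOf π] k₀ = k₀
        rw [hF, Equiv.Perm.iterate_eq_pow, pow_orderOf_eq_one]
        rfl
      set m := Function.minimalPeriod F k₀ with hmm
      have hm0 : 0 < m := Function.minimalPeriod_pos_of_mem_periodicPts hper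
      have hm1 : m ≠ 1 := by
        intro h
        apply hπk₀
        have := Function.iterate_minimalPeriod (f := F) (x := k₀)
        rw [← hmm, h] at this
        simpa using this
      have hm2 : 2 ≤ m := by omega
      set ℓ : ℕ → Fin r := fun i => F^[i % m] k₀ with hℓ
      have hperℓ : ∀ i, ℓ (i % m) = ℓ i := by
        intro i; rw [hℓ]; simp only
        rw [Nat.mod_mod_of_dvd _ dvd_rfl]
      have hℓval : ∀ i < m, ℓ i = F^[i] k₀ := by
        intro i hi; rw [hℓ]; simp only [Nat.mod_eq_of_lt hi]
      have hinj : ∀ i < m, ∀ j < m, ℓ i = ℓ j → i = j := by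
        intro i hi j hj hij
        rw [hℓval i hi, hℓval j hj] at hij
        exact Function.iterate_injOn_Iio_minimalPeriod hi hj hij
      have hstep : ∀ i, ℓ (i + 1) = F (ℓ i) := by
        intro i
        rw [hℓ]; simp only
        rw [Function.iterate_mod_minimalPeriod_eq, Function.iterate_mod_minimalPeriod_eq,
          Function.iterate_succ_apply']
      have hY : ∀ i < m, (s (ℓ i)).1 ≤ (s (ℓ (i + 1))).2 := by
        intro i hi
        rw [hstep i]
        have h1 : (s (F (ℓ i))).2 = (t (ℓ i)).2 := hπ (ℓ i)
        rw [h1, hfst (ℓ i)]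
        exact htval (ℓ i)
      obtain ⟨s', hR, hfst', hmain, hoff⟩ := cycleL hQ m hm2 s ℓ hperℓ hinj hsval hY
      have horb : ∀ i < m, s' (ℓ i) = t (ℓ i) := by
        intro i hi
        refine Prod.ext ((hfst' _).trans (hfst _)) ?_
        rw [hmain i hi, hstep i]
        exact hπ (ℓ i)
      have hℓ0 : ℓ 0 = k₀ := by rw [hℓ]; simp
      have hsub : (Finset.univ.filter fun k => s' k ≠ t k) ⊆
          (Finset.univ.filter fun k => s k ≠ t k).erase k₀ := by
        intro k hk
        rw [Finset.mem_filter] at hk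
        by_cases horbk : ∃ i < m, ℓ i = k
        · obtain ⟨i, hi, rfl⟩ := horbk
          exact absurd (horb i hi) hk.2
        · push_neg at horbk
          have hoffk : s' k = s k := hoff k horbk
          rw [Finset.mem_erase]
          constructor
          · intro h
            exact horbk 0 hm0 (by rw [hℓ0, h])
          · rw [Finset.mem_filter]
            exact ⟨Finset.mem_univ _, by rw [← hoffk]; exact hk.2⟩
      have hk₀mem : k₀ ∈ (Finset.univ.filter fun k => s k ≠ t k) := by
        simp [hk₀]
      have hcard' : (Finset.univ.filter fun k => s' k ≠ t k).card ≤ N := by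
        have h1 := Finset.card_le_card hsub
        rw [Finset.card_erase_of_mem hk₀mem] at h1
        omega
      refine hR.trans (IHN s' t hcard' ?_ ?_ htval ?_)
      · intro k; rw [hfst' k]; exact hfst k
      · exact MReach.valid hR hsval
      · rw [MReach.snd_multiset hR]; exact hsnd

/-- connectivity of valid matchings with equal left parts and equal multisets of rights -/
lemma matchConnect
    (hQ : ∀ m : ℕ, 3 ≤ m → ∀ q : ℕ → Q, IsPosetCycle m q → IsProperPosetCycle m q →
      HasChord m q)
    {r : ℕ} (s t : Fin r → Q × Q)
    (hfst : ∀ k, (s k).1 = (t k).1)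
    (hsval : ∀ k, (s k).1 ≤ (s k).2)
    (htval : ∀ k, (t k).1 ≤ (t k).2)
    (hsnd : Multiset.map (fun k => (s k).2) Finset.univ.val
      = Multiset.map (fun k => (t k).2) Finset.univ.val) :
    Relation.ReflTransGen MStep s t :=
  matchConnectAux hQ _ s t le_rfl hfst hsval htval hsnd

end MatchConnect

section Families
open scoped Classical
variable {P Q : Type} [PartialOrder P] [PartialOrder Q] [Fintype P] {r : ℕ}

/-- columns of a family of isotone maps -/
def colM (f : Fin r → P →o Q) (p : P) : Multiset Q :=
  Multiset.map (fun k => f k p) Finset.univ.val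

def Swappable (a b a' b' : P →o Q) : Prop :=
  ∀ p, ({a p, b p} : Multiset Q) = {a' p, b' p}

def StepF (f g : Fin r → P →o Q) : Prop :=
  ∃ i j a' b', i ≠ j ∧ Swappable (f i) (f j) a' b' ∧
    g = Function.update (Function.update f i a') j b'

lemma cons_cons_eq_pair_add (a b : Q) (R : Multiset Q) :
    a ::ₘ b ::ₘ R = ({a, b} : Multiset Q) + R := by
  rw [Multiset.insert_eq_cons, Multiset.cons_add, Multiset.singleton_add]

lemma StepF.colM_eq {f g : Fin r → P →o Q} (h : StepF f g) : ∀ p, colM g p = colM f p := by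
  obtain ⟨i, j, a', b', hij, hsw, rfl⟩ := h
  intro p
  have e1 : (fun k => (Function.update (Function.update f i a') j b') k p)
      = Function.update (Function.update (fun k => f k p) i (a' p)) j (b' p) := by
    funext k
    rcases eq_or_ne k j with rfl | hkj
    · rw [Function.update_self, Function.update_self]
    · rw [Function.update_of_ne hkj, Function.update_of_ne hkj]
      rcases eq_or_ne k i with rfl | hki
      · rw [Function.update_self, Function.update_self]
      · rw [Function.update_of_ne hki, Function.update_of_ne hki]
  show Multiset.map (fun k => (Function.update (Function.update f i a') j b') k p)
    Finset.univ.val = _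
  rw [e1, map_update2 _ hij, colM, map_self2 (fun k => f k p) hij,
    cons_cons_eq_pair_add, cons_cons_eq_pair_add, ← hsw p]

lemma ReachF.colM_eq {f g : Fin r → P →o Q} (h : Relation.ReflTransGen StepF f g) :
    ∀ p, colM g p = colM f p := by
  induction h with
  | refl => exact fun p => rfl
  | tail _ hstep ih => exact fun p => (hstep.colM_eq p).trans (ih p)

lemma stepF_swap (f : Fin r → P →o Q) {i j : Fin r} (hij : i ≠ j) :
    StepF f (f ∘ Equiv.swap i j) := by
  refine ⟨i, j, f j, f i, hij, fun p => Multiset.pair_comm _ _, ?_⟩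
  funext k
  simp only [Function.comp_apply]
  rcases eq_or_ne k j with rfl | hkj
  · rw [Function.update_self, Equiv.swap_apply_right]
  · rw [Function.update_of_ne hkj]
    rcases eq_or_ne k i with rfl | hki
    · rw [Function.update_self, Equiv.swap_apply_left]
    · rw [Function.update_of_ne hki, Equiv.swap_apply_of_ne_of_ne hki hkj]

lemma reachF_perm (σ : Equiv.Perm (Fin r)) (f : Fin r → P →o Q) :
    Relation.ReflTransGen StepF f (f ∘ σ) := by
  have main : ∀ σ : Equiv.Perm (Fin r), ∀ f : Fin r → P →o Q,
      Relation.ReflTransGen StepF f (f ∘ σ) := by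
    intro σ
    refine Equiv.Perm.swap_induction_on σ (fun f => ?_) (fun τ x y hxy ih f => ?_)
    · have : f ∘ ⇑(1 : Equiv.Perm (Fin r)) = f := rfl
      rw [this]
    · have e : f ∘ ⇑(Equiv.swap x y * τ) = (f ∘ Equiv.swap x y) ∘ τ := by
        funext k; simp [Equiv.Perm.mul_apply]
      rw [e]
      exact Relation.ReflTransGen.trans
        (Relation.ReflTransGen.single (stepF_swap f hxy)) (ih (f ∘ Equiv.swap x y))
  exact main σ f

section Realize

/-- mixing two isotone maps along the up-set of `ps` -/
noncomputable def mix (hroot : ∀ a b c : P, a ≤ c → b ≤ c → a ≤ b ∨ b ≤ a)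
    {ps qs : P} (hqmax : ∀ x, x < ps → x ≤ qs)
    (φ ψ : P →o Q) (hcross : φ qs ≤ ψ ps) : P →o Q where
  toFun := fun x => if ps ≤ x then ψ x else φ x
  monotone' := by
    intro x y hxy
    dsimp only
    by_cases hx : ps ≤ x <;> by_cases hy : ps ≤ y
    · rw [if_pos hx, if_pos hy]; exact ψ.monotone hxy
    · exact absurd (hx.trans hxy) hy
    · rw [if_neg hx, if_pos hy]
      have hcomp := hroot x ps y hxy hy
      have hxle : x ≤ ps := by
        rcases hcomp with h | h
        · exact h
        · exact absurd h hx
      have hxlt : x < ps := lt_of_le_of_ne hxle (fun h => hx (le_of_eq h.symm))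
      calc φ x ≤ φ qs := φ.monotone (hqmax x hxlt)
        _ ≤ ψ ps := hcross
        _ ≤ ψ y := ψ.monotone hy
    · rw [if_neg hx, if_neg hy]; exact φ.monotone hxy

lemma mix_of_le (hroot : ∀ a b c : P, a ≤ c → b ≤ c → a ≤ b ∨ b ≤ a)
    {ps qs : P} (hqmax : ∀ x, x < ps → x ≤ qs)
    (φ ψ : P →o Q) (hcross : φ qs ≤ ψ ps) {x : P} (hx : ps ≤ x) :
    mix hroot hqmax φ ψ hcross x = ψ x := if_pos hx

lemma mix_of_not_le (hroot : ∀ a b c : P, a ≤ c → b ≤ c → a ≤ b ∨ b ≤ a)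
    {ps qs : P} (hqmax : ∀ x, x < ps → x ≤ qs)
    (φ ψ : P →o Q) (hcross : φ qs ≤ ψ ps) {x : P} (hx : ¬ ps ≤ x) :
    mix hroot hqmax φ ψ hcross x = φ x := if_neg hx

lemma not_ps_le_qs {ps qs : P} (hq : qs < ps) : ¬ ps ≤ qs :=
  fun h => absurd (lt_of_lt_of_le hq h) (lt_irrefl _)

/-- realizing a chain of matching moves at the pair `qs < ps` by family moves -/
lemma realize (hroot : ∀ a b c : P, a ≤ c → b ≤ c → a ≤ b ∨ b ≤ a)
    {ps qs : P} (hq : qs < ps) (hqmax : ∀ x, x < ps → x ≤ qs)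
    {s t : Fin r → Q × Q} (hst : Relation.ReflTransGen MStep s t) :
    ∀ f : Fin r → P →o Q, (∀ k, f k qs = (s k).1 ∧ f k ps = (s k).2) →
      ∃ f', Relation.ReflTransGen StepF f f' ∧
        (∀ k, f' k qs = (t k).1 ∧ f' k ps = (t k).2) ∧
        (∀ k x, ¬ ps ≤ x → f' k x = f k x) := by
  induction hst using Relation.ReflTransGen.head_induction_on with
  | refl =>
    intro f hf
    exact ⟨f, Relation.ReflTransGen.refl, hf, fun k x _ => rfl⟩
  | head hstep _ ih =>
    rename_i s c _
    intro f hf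
    obtain ⟨i, j, hij, h1, h2, rfl⟩ := hstep
    have hc1 : f i qs ≤ f j ps := by rw [(hf i).1, (hf j).2]; exact h1
    have hc2 : f j qs ≤ f i ps := by rw [(hf j).1, (hf i).2]; exact h2
    set a' := mix hroot hqmax (f i) (f j) hc1 with ha'
    set b' := mix hroot hqmax (f j) (f i) hc2 with hb'
    have hsw : Swappable (f i) (f j) a' b' := by
      intro p
      by_cases hp : ps ≤ p
      · rw [ha', hb', mix_of_le hroot hqmax _ _ _ hp, mix_of_le hroot hqmax _ _ _ hp]
        exact Multiset.pair_comm _ _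
      · rw [ha', hb', mix_of_not_le hroot hqmax _ _ _ hp, mix_of_not_le hroot hqmax _ _ _ hp]
    set f₁ := Function.update (Function.update f i a') j b' with hf₁
    have hstepF : StepF f f₁ := ⟨i, j, a', b', hij, hsw, hf₁⟩
    have hreal : ∀ k, f₁ k qs = ((Function.update (Function.update s i ((s i).1, (s j).2)) j
        ((s j).1, (s i).2)) k).1 ∧ f₁ k ps = ((Function.update (Function.update s i
        ((s i).1, (s j).2)) j ((s j).1, (s i).2)) k).2 := by
      intro k
      rcases eq_or_ne k j with rfl | hkj
      · rw [hf₁, Function.update_self, Function.update_self]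
        constructor
        · rw [hb', mix_of_not_le hroot hqmax _ _ _ (not_ps_le_qs hq)]
          exact (hf k).1
        · rw [hb', mix_of_le hroot hqmax _ _ _ le_rfl]
          exact (hf i).2
      · rw [hf₁, Function.update_of_ne hkj, Function.update_of_ne hkj]
        rcases eq_or_ne k i with rfl | hki
        · rw [Function.update_self, Function.update_self]
          constructor
          · rw [ha', mix_of_not_le hroot hqmax _ _ _ (not_ps_le_qs hq)]
            exact (hf k).1
          · rw [ha', mix_of_le hroot hqmax _ _ _ le_rfl]
            exact (hf j).2
        · rw [Function.update_of_ne hki, Function.update_of_ne hki]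
          exact hf k
    obtain ⟨f', hR, hf', hoff⟩ := ih f₁ hreal
    refine ⟨f', Relation.ReflTransGen.head hstepF hR, hf', ?_⟩
    intro k x hx
    rw [hoff k x hx]
    rcases eq_or_ne k j with rfl | hkj
    · rw [hf₁, Function.update_self, hb', mix_of_not_le hroot hqmax _ _ _ hx]
    · rw [hf₁, Function.update_of_ne hkj]
      rcases eq_or_ne k i with rfl | hki
      · rw [Function.update_self, ha', mix_of_not_le hroot hqmax _ _ _ hx]
      · rw [Function.update_of_ne hki]

end Realize
end Families

section FamilyConnect
open scoped Classical
variable {P Q : Type} [PartialOrder P] [PartialOrder Q] [Fintype P] {r : ℕ}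

lemma lemDaux
    (hQ : ∀ m : ℕ, 3 ≤ m → ∀ q : ℕ → Q, IsPosetCycle m q → IsProperPosetCycle m q →
      HasChord m q)
    (hmin : ∃ p₀ : P, ∀ x : P, p₀ ≤ x)
    (hroot : ∀ a b c : P, a ≤ c → b ≤ c → a ≤ b ∨ b ≤ a) :
    ∀ (N : ℕ) {r : ℕ} (f g : Fin (r + 1) → P →o Q),
      (∀ p, colM f p = colM g p) →
      (Finset.univ.filter fun x : P => ¬ ∀ y ≤ x, f 0 y = g 0 y).card ≤ N →
      ∃ f', Relation.ReflTransGen StepF f f' ∧ f' 0 = g 0 := by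
  intro N
  induction N with
  | zero =>
    intro r f g hcol hcard
    refine ⟨f, Relation.ReflTransGen.refl, ?_⟩
    have hempty : (Finset.univ.filter fun x : P => ¬ ∀ y ≤ x, f 0 y = g 0 y) = ∅ :=
      Finset.card_eq_zero.1 (Nat.le_zero.1 hcard)
    have hag : ∀ x : P, ∀ y ≤ x, f 0 y = g 0 y := by
      intro x
      by_contra hx
      have : x ∈ (Finset.univ.filter fun x : P => ¬ ∀ y ≤ x, f 0 y = g 0 y) := by
        rw [Finset.mem_filter]; exact ⟨Finset.mem_univ _, hx⟩
      rw [hempty] at this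
      exact absurd this (Finset.notMem_empty x)
    exact OrderHom.ext _ _ (funext fun x => hag x x le_rfl)
  | succ N IH =>
    intro r f g hcol hcard
    by_cases hag : ∀ x : P, ∀ y ≤ x, f 0 y = g 0 y
    · exact ⟨f, Relation.ReflTransGen.refl, OrderHom.ext _ _ (funext fun x => hag x x le_rfl)⟩
    · push_neg at hag
      obtain ⟨x₀, y₀, hy₀, hne₀⟩ := hag
      have hne : (Finset.univ.filter fun x : P => ¬ ∀ y ≤ x, f 0 y = g 0 y).Nonempty := by
        refine ⟨x₀, ?_⟩
        rw [Finset.mem_filter]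
        refine ⟨Finset.mem_univ _, ?_⟩
        push_neg
        exact ⟨y₀, hy₀, hne₀⟩
      obtain ⟨pₛ, hpmin'⟩ := Finset.exists_minimal hne
      have hpmem := hpmin'.prop
      have hpmin := fun x hx => hpmin'.not_lt (y := x) hx
      have hpbad : ¬ ∀ y ≤ pₛ, f 0 y = g 0 y := (Finset.mem_filter.1 hpmem).2
      have hbelow : ∀ x, x < pₛ → ∀ y ≤ x, f 0 y = g 0 y := by
        intro x hx
        by_contra hxx
        exact hpmin x (Finset.mem_filter.2 ⟨Finset.mem_univ _, hxx⟩) hx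
      have hne0 : f 0 pₛ ≠ g 0 pₛ := by
        intro h
        apply hpbad
        intro y hy
        rcases eq_or_lt_of_le hy with rfl | hy'
        · exact h
        · exact hbelow y hy' y le_rfl
      by_cases hex : ∃ x, x < pₛ
      · -- pₛ has a predecessor qₛ
        have hsdne : (Finset.univ.filter fun x : P => x < pₛ).Nonempty := by
          obtain ⟨x, hx⟩ := hex
          exact ⟨x, Finset.mem_filter.2 ⟨Finset.mem_univ _, hx⟩⟩
        obtain ⟨qₛ, hqmax''⟩ := Finset.exists_maximal hsdne
        have hqmem := hqmax''.prop
        have hqmax' := fun x hx => hqmax''.not_gt (y := x) hx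
        have hq : qₛ < pₛ := (Finset.mem_filter.1 hqmem).2
        have hqmax : ∀ x, x < pₛ → x ≤ qₛ := by
          intro x hx
          rcases hroot x qₛ pₛ (le_of_lt hx) (le_of_lt hq) with h | h
          · exact h
          · rcases eq_or_lt_of_le h with h' | h'
            · exact le_of_eq h'.symm
            · exact absurd h' (hqmax' x (Finset.mem_filter.2 ⟨Finset.mem_univ _, hx⟩))
        have haq : f 0 qₛ = g 0 qₛ := hbelow qₛ hq qₛ le_rfl
        obtain ⟨σ, hσ⟩ := exists_perm_comp (fun k => f k qₛ) (fun k => g k qₛ) (hcol qₛ)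
        set τ := σ.trans (Equiv.swap (σ 0) 0) with hτdef
        have hτ0 : τ 0 = 0 := by
          rw [hτdef, Equiv.trans_apply, Equiv.swap_apply_left]
        have hj : f (σ 0) qₛ = g 0 qₛ := hσ 0
        have hτ : ∀ k, f (τ k) qₛ = g k qₛ := by
          intro k
          rw [hτdef, Equiv.trans_apply]
          rcases eq_or_ne (σ k) (σ 0) with he | hne'
          · rw [he, Equiv.swap_apply_left]
            have h2 : f (σ 0) qₛ = g k qₛ := by rw [← he]; exact hσ k
            rw [haq, ← hj]
            exact h2
          · rcases eq_or_ne (σ k) 0 with he0 | hne0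
            · rw [he0, Equiv.swap_apply_right]
              rw [hj, ← haq, ← he0, hσ k]
            · rw [Equiv.swap_apply_of_ne_of_ne hne' hne0, hσ k]
        set sM : Fin (r + 1) → Q × Q := fun k => (f k qₛ, f k pₛ) with hsM
        set tM : Fin (r + 1) → Q × Q := fun k => (f k qₛ, g (τ.symm k) pₛ) with htM
        have hτsymm : ∀ k, f k qₛ = g (τ.symm k) qₛ := by
          intro k
          have := hτ (τ.symm k)
          rwa [Equiv.apply_symm_apply] at this
        have hMR : Relation.ReflTransGen MStep sM tM := by
          apply matchConnect hQ
          · intro k; rfl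
          · intro k; exact (f k).monotone (le_of_lt hq)
          · intro k
            show f k qₛ ≤ g (τ.symm k) pₛ
            rw [hτsymm k]
            exact (g (τ.symm k)).monotone (le_of_lt hq)
          · show Multiset.map (fun k => f k pₛ) Finset.univ.val
              = Multiset.map (fun k => g (τ.symm k) pₛ) Finset.univ.val
            have h1 : Multiset.map (⇑τ.symm) Finset.univ.val = Finset.univ.val := by
              conv_rhs => rw [← Finset.map_univ_equiv τ.symm]
              rw [Finset.map_val]
              rfl
            have h2 : colM g pₛ = Multiset.map (fun k => g (τ.symm k) pₛ) Finset.univ.val := by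
              rw [colM]
              conv_lhs => rw [← h1]
              rw [Multiset.map_map]
              rfl
            exact (hcol pₛ).trans h2
        obtain ⟨f₁, hR1, hreal, hoff⟩ := realize hroot hq hqmax hMR f (fun k => ⟨rfl, rfl⟩)
        have hτs0 : τ.symm 0 = 0 := by
          rw [Equiv.symm_apply_eq]
          exact hτ0.symm
        have hf₁0p : f₁ 0 pₛ = g 0 pₛ := by
          have h2 := (hreal 0).2
          rw [htM] at h2
          simp only at h2
          rw [h2, hτs0]
        have hA1 : ∀ x, (∀ y ≤ x, f 0 y = g 0 y) → ∀ y ≤ x, f₁ 0 y = g 0 y := by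
          intro x hx y hy
          have hnp : ¬ pₛ ≤ y := by
            intro hp
            apply hpbad
            intro z hz
            exact hx z (hz.trans (hp.trans hy))
          rw [hoff 0 y hnp]
          exact hx y hy
        have hps1 : ∀ y ≤ pₛ, f₁ 0 y = g 0 y := by
          intro y hy
          rcases eq_or_lt_of_le hy with rfl | hy'
          · exact hf₁0p
          · have hnp : ¬ pₛ ≤ y := fun hp => absurd (lt_of_le_of_lt hp hy') (lt_irrefl _)
            rw [hoff 0 y hnp]
            exact hbelow y hy' y le_rfl
        have hsub : (Finset.univ.filter fun x : P => ¬ ∀ y ≤ x, f₁ 0 y = g 0 y)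
            ⊆ (Finset.univ.filter fun x : P => ¬ ∀ y ≤ x, f 0 y = g 0 y).erase pₛ := by
          intro x hx
          rw [Finset.mem_filter] at hx
          rw [Finset.mem_erase, Finset.mem_filter]
          refine ⟨?_, Finset.mem_univ _, ?_⟩
          · rintro rfl
            exact hx.2 hps1
          · intro hagx
            exact hx.2 (hA1 x hagx)
        have hcard₁ : (Finset.univ.filter fun x : P => ¬ ∀ y ≤ x, f₁ 0 y = g 0 y).card ≤ N := by
          have h1 := Finset.card_le_card hsub
          rw [Finset.card_erase_of_mem hpmem] at h1
          omega
        have hcol₁ : ∀ p, colM f₁ p = colM g p :=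
          fun p => (ReachF.colM_eq hR1 p).trans (hcol p)
        obtain ⟨f', hR', h0⟩ := IH f₁ g hcol₁ hcard₁
        exact ⟨f', hR1.trans hR', h0⟩
      · -- pₛ is the least element
        push_neg at hex
        have hmem : g 0 pₛ ∈ colM f pₛ := by
          rw [hcol pₛ]
          exact Multiset.mem_map.2 ⟨0, Finset.mem_univ_val _, rfl⟩
        obtain ⟨i, _, hival⟩ := Multiset.mem_map.1 hmem
        have hi0 : (0 : Fin (r + 1)) ≠ i := by
          intro h
          rw [← h] at hival
          exact hne0 hival
        set f₁ := f ∘ Equiv.swap 0 i with hf₁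
        have hstep : StepF f f₁ := stepF_swap f hi0
        have hf₁0 : f₁ 0 = f i := by
          rw [hf₁]; simp only [Function.comp_apply, Equiv.swap_apply_left]
        have hps1 : ∀ y ≤ pₛ, f₁ 0 y = g 0 y := by
          intro y hy
          have hy' : y = pₛ := le_antisymm hy (by
            by_contra hc
            exact hex y (lt_of_le_of_ne hy (fun h => hc (le_of_eq h.symm))))
          rw [hy', hf₁0, hival]
        have hbadf : ∀ x : P, ¬ ∀ y ≤ x, f 0 y = g 0 y := by
          intro x hx
          obtain ⟨p₀, hp₀⟩ := hmin
          have hp₀p : p₀ = pₛ := by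
            rcases eq_or_lt_of_le (hp₀ pₛ) with h | h
            · exact h
            · exact absurd h (hex p₀)
          apply hne0
          exact hx pₛ (hp₀p ▸ hp₀ x)
        have hsub : (Finset.univ.filter fun x : P => ¬ ∀ y ≤ x, f₁ 0 y = g 0 y)
            ⊆ Finset.univ.erase pₛ := by
          intro x hx
          rw [Finset.mem_filter] at hx
          rw [Finset.mem_erase]
          refine ⟨?_, Finset.mem_univ _⟩
          rintro rfl
          exact hx.2 hps1
        have hcardf : (Finset.univ.filter fun x : P => ¬ ∀ y ≤ x, f 0 y = g 0 y).card
            = (Finset.univ : Finset P).card := by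
          rw [Finset.filter_true_of_mem (fun x _ => hbadf x)]
        have hcard₁ : (Finset.univ.filter fun x : P => ¬ ∀ y ≤ x, f₁ 0 y = g 0 y).card ≤ N := by
          have h1 := Finset.card_le_card hsub
          rw [Finset.card_erase_of_mem (Finset.mem_univ pₛ)] at h1
          omega
        have hcol₁ : ∀ p, colM f₁ p = colM g p :=
          fun p => (hstep.colM_eq p).trans (hcol p)
        obtain ⟨f', hR', h0⟩ := IH f₁ g hcol₁ hcard₁
        exact ⟨f', (Relation.ReflTransGen.single hstep).trans hR', h0⟩

lemma colM_succ (h : Fin (r + 1) → P →o Q) (p : P) :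
    colM h p = h 0 p ::ₘ colM (fun i : Fin r => h i.succ) p := by
  rw [colM, colM, Fin.univ_succ, Finset.cons_val, Multiset.map_cons, Finset.map_val,
    Multiset.map_map]
  rfl

lemma stepF_cons {h h' : Fin r → P →o Q} (x : P →o Q) (hs : StepF h h') :
    StepF (Fin.cons x h : Fin (r + 1) → P →o Q) (Fin.cons x h') := by
  obtain ⟨i, j, a', b', hij, hsw, rfl⟩ := hs
  refine ⟨i.succ, j.succ, a', b', fun hc => hij (Fin.succ_injective _ hc), hsw, ?_⟩
  rw [Fin.cons_update, Fin.cons_update]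

lemma reachF_cons {h h' : Fin r → P →o Q} (x : P →o Q)
    (hs : Relation.ReflTransGen StepF h h') :
    Relation.ReflTransGen StepF (Fin.cons x h : Fin (r + 1) → P →o Q) (Fin.cons x h') := by
  induction hs with
  | refl => exact Relation.ReflTransGen.refl
  | tail _ hstep ih => exact ih.tail (stepF_cons x hstep)

/-- full connectivity of families with equal columns -/
lemma famConnect
    (hQ : ∀ m : ℕ, 3 ≤ m → ∀ q : ℕ → Q, IsPosetCycle m q → IsProperPosetCycle m q →
      HasChord m q)
    (hmin : ∃ p₀ : P, ∀ x : P, p₀ ≤ x)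
    (hroot : ∀ a b c : P, a ≤ c → b ≤ c → a ≤ b ∨ b ≤ a) :
    ∀ (r : ℕ) (f g : Fin r → P →o Q), (∀ p, colM f p = colM g p) →
      Relation.ReflTransGen StepF f g := by
  intro r
  induction r with
  | zero =>
    intro f g _
    have : f = g := funext (fun i => i.elim0)
    rw [this]
  | succ r IH =>
    intro f g hcol
    obtain ⟨f', hR, h0⟩ := lemDaux hQ hmin hroot _ f g hcol le_rfl
    have hcol' : ∀ p, colM f' p = colM g p :=
      fun p => (ReachF.colM_eq hR p).trans (hcol p)
    have hcols'' : ∀ p, colM (fun i : Fin r => f' i.succ) p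
        = colM (fun i : Fin r => g i.succ) p := by
      intro p
      have hx := hcol' p
      rw [colM_succ f', colM_succ g, h0] at hx
      exact (Multiset.cons_inj_right _).1 hx
    have htail := IH _ _ hcols''
    have e1 : Fin.cons (g 0) (fun i : Fin r => f' i.succ) = f' := by
      rw [← h0]
      exact Fin.cons_self_tail f'
    have e2 : Fin.cons (g 0) (fun i : Fin r => g i.succ) = g := Fin.cons_self_tail g
    have := reachF_cons (g 0) htail
    rw [e1, e2] at this
    exact hR.trans this

end FamilyConnect

section MultisetConnect
variable {P Q : Type} [PartialOrder P] [PartialOrder Q] [Fintype P]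

/-- one exchange move on multisets of isotone maps -/
def StepM (M N : Multiset (P →o Q)) : Prop :=
  ∃ φ ψ α β C, M = φ ::ₘ ψ ::ₘ C ∧ N = α ::ₘ β ::ₘ C ∧ Swappable φ ψ α β

def famMS {r : ℕ} (f : Fin r → P →o Q) : Multiset (P →o Q) :=
  Multiset.map f Finset.univ.val

lemma stepF_to_stepM {r : ℕ} {f g : Fin r → P →o Q} (h : StepF f g) :
    StepM (famMS f) (famMS g) := by
  classical
  obtain ⟨i, j, a', b', hij, hsw, rfl⟩ := h
  exact ⟨f i, f j, a', b', Multiset.map f ((Finset.univ.val.erase i).erase j),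
    map_self2 f hij, map_update2 f hij a' b', hsw⟩

lemma reachF_to_reachM {r : ℕ} {f g : Fin r → P →o Q}
    (h : Relation.ReflTransGen StepF f g) :
    Relation.ReflTransGen StepM (famMS f) (famMS g) := by
  induction h with
  | refl => exact Relation.ReflTransGen.refl
  | tail _ hstep ih => exact ih.tail (stepF_to_stepM hstep)

lemma famMS_get (l : List (P →o Q)) : famMS l.get = (l : Multiset (P →o Q)) := by
  have h1 : (Finset.univ : Finset (Fin l.length)).val = ↑(List.finRange l.length) := rfl
  rw [famMS, h1, Multiset.map_coe, List.map_get_finRange]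

lemma colM_famMS {r : ℕ} (f : Fin r → P →o Q) (p : P) :
    colM f p = (famMS f).map (fun φ => φ p) := by
  rw [colM, famMS, Multiset.map_map]
  rfl

lemma multisetConnect
    (hQ : ∀ m : ℕ, 3 ≤ m → ∀ q : ℕ → Q, IsPosetCycle m q → IsProperPosetCycle m q →
      HasChord m q)
    (hmin : ∃ p₀ : P, ∀ x : P, p₀ ≤ x)
    (hroot : ∀ a b c : P, a ≤ c → b ≤ c → a ≤ b ∨ b ≤ a)
    (M N : Multiset (P →o Q))
    (hcol : ∀ p, M.map (fun φ => φ p) = N.map (fun φ => φ p)) :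
    Relation.ReflTransGen StepM M N := by
  obtain ⟨p₀, _⟩ := id hmin
  obtain ⟨lM, hlM⟩ := Quotient.exists_rep M
  obtain ⟨lN, hlN⟩ := Quotient.exists_rep N
  have hMl : M = (lM : Multiset (P →o Q)) := hlM.symm
  have hNl : N = (lN : Multiset (P →o Q)) := hlN.symm
  have hcard : lM.length = lN.length := by
    have h1 : Multiset.card (M.map (fun φ => φ p₀)) = Multiset.card (N.map (fun φ => φ p₀)) :=
      by rw [hcol p₀]
    rw [Multiset.card_map, Multiset.card_map, hMl, hNl, Multiset.coe_card,
      Multiset.coe_card] at h1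
    exact h1
  set fM : Fin lM.length → P →o Q := lM.get with hfM
  set gN : Fin lM.length → P →o Q := fun i => lN.get (finCongr hcard i) with hgN
  have hfam1 : famMS fM = M := by rw [hfM, famMS_get, hMl]
  have hfam2 : famMS gN = N := by
    rw [hgN]
    have h2 : Multiset.map (⇑(finCongr hcard)) (Finset.univ : Finset (Fin lM.length)).val
        = (Finset.univ : Finset (Fin lN.length)).val := by
      conv_rhs => rw [← Finset.map_univ_equiv (finCongr hcard)]
      rw [Finset.map_val]
      rfl
    show Multiset.map (fun i => lN.get (finCongr hcard i)) Finset.univ.val = N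
    have h3 : (fun i => lN.get (finCongr hcard i)) = lN.get ∘ ⇑(finCongr hcard) := rfl
    rw [h3, ← Multiset.map_map, h2]
    rw [← famMS, famMS_get, hNl]
  have hcols : ∀ p, colM fM p = colM gN p := by
    intro p
    rw [colM_famMS, colM_famMS, hfam1, hfam2]
    exact hcol p
  have := reachF_to_reachM (famConnect hQ hmin hroot _ fM gN hcols)
  rwa [hfam1, hfam2] at this

end MultisetConnect

section Algebra
open scoped Classical
variable (K : Type) {P Q : Type} [Field K] [PartialOrder P] [Fintype P]
  [PartialOrder Q] [Fintype Q]

/-- exponent vector of the image monomial of `t_φ` -/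
noncomputable def eexp (φ : P →o Q) : P × Q →₀ ℕ := ∑ p : P, Finsupp.single (p, φ p) 1

/-- exponent image of a monomial -/
noncomputable def Aexp (u : (P →o Q) →₀ ℕ) : P × Q →₀ ℕ := u.sum fun φ n => n • eexp φ

lemma eexp_apply (φ : P →o Q) (p : P) (q' : Q) :
    eexp φ (p, q') = if φ p = q' then 1 else 0 := by
  classical
  rw [eexp, Finsupp.finset_sum_apply]
  rw [Finset.sum_eq_single p]
  · rw [Finsupp.single_apply]
    by_cases h : φ p = q'
    · rw [if_pos h, if_pos (by rw [h])]
    · rw [if_neg h, if_neg (by simp [h])]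
  · intro b _ hb
    rw [Finsupp.single_apply, if_neg (by simp [hb])]
  · intro hp
    exact absurd (Finset.mem_univ p) hp

lemma Aexp_zero : Aexp (0 : (P →o Q) →₀ ℕ) = 0 := by
  rw [Aexp, Finsupp.sum_zero_index]

lemma Aexp_add (u v : (P →o Q) →₀ ℕ) : Aexp (u + v) = Aexp u + Aexp v := by
  rw [Aexp, Aexp, Aexp]
  exact Finsupp.sum_add_index' (fun φ => zero_smul _ _) (fun φ m n => add_smul m n _)

lemma Aexp_single (φ : P →o Q) (n : ℕ) : Aexp (Finsupp.single φ n) = n • eexp φ := by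
  rw [Aexp]
  exact Finsupp.sum_single_index (zero_smul ℕ (eexp φ))

lemma X_eq_monomial' {σ R : Type*} [CommSemiring R] (x : σ) :
    (X x : MvPolynomial σ R) = monomial (Finsupp.single x 1) 1 := by
  rw [← X_pow_eq_monomial, pow_one]

lemma monomial_one_zero {σ R : Type*} [CommSemiring R] :
    (monomial (0 : σ →₀ ℕ) (1 : R)) = 1 := by
  rw [MvPolynomial.monomial_zero']
  exact map_one C

lemma prod_X_finset (φ : P →o Q) (s : Finset P) :
    (∏ p ∈ s, (X (p, φ p) : MvPolynomial (P × Q) K))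
      = monomial (∑ p ∈ s, Finsupp.single (p, φ p) 1) 1 := by
  classical
  induction s using Finset.induction with
  | empty =>
    rw [Finset.prod_empty, Finset.sum_empty, monomial_one_zero]
  | insert _ _ h ih =>
    rename_i a s'
    rw [Finset.prod_insert h, Finset.sum_insert h, ih, X_eq_monomial', monomial_mul, one_mul]

lemma prod_X_single (φ : P →o Q) :
    (∏ p : P, (X (p, φ p) : MvPolynomial (P × Q) K)) = monomial (eexp φ) 1 := by
  rw [eexp]
  exact prod_X_finset K φ Finset.univ

lemma Phi_monomial (u : (P →o Q) →₀ ℕ) :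
    isotonianMap K P Q (monomial u 1) = monomial (Aexp u) 1 := by
  induction u using Finsupp.induction with
  | zero =>
    rw [Aexp_zero, monomial_one_zero, monomial_one_zero, map_one]
  | single_add φ n u hφ hn ih =>
    have e1 : (monomial (Finsupp.single φ n + u) (1 : K))
        = monomial (Finsupp.single φ n) 1 * monomial u 1 := by
      rw [monomial_mul, one_mul]
    rw [e1, map_mul, ih]
    have e2 : (monomial (Finsupp.single φ n) (1 : K)) = X φ ^ n := (X_pow_eq_monomial).symm
    rw [e2, map_pow]
    have e3 : isotonianMap K P Q (X φ) = ∏ p : P, X (p, φ p) := aeval_X _ φ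
    rw [e3, prod_X_single, monomial_pow, one_pow, monomial_mul, one_mul,
      Aexp_add, Aexp_single]

lemma Phi_monomial_c (u : (P →o Q) →₀ ℕ) (c : K) :
    isotonianMap K P Q (monomial u c) = monomial (Aexp u) c := by
  have e : (monomial u c : MvPolynomial (P →o Q) K) = C c * monomial u 1 := by
    rw [C_mul_monomial, mul_one]
  have hC : isotonianMap K P Q (C c) = C c := by
    show aeval _ (C c) = C c
    rw [aeval_C, MvPolynomial.algebraMap_eq]
  rw [e, map_mul, Phi_monomial, hC, C_mul_monomial, mul_one]

lemma Aexp_count (u : (P →o Q) →₀ ℕ) (p : P) (q' : Q) :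
    Aexp u (p, q') = Multiset.count q' ((Finsupp.toMultiset u).map (fun φ => φ p)) := by
  classical
  induction u using Finsupp.induction with
  | zero =>
    rw [Aexp_zero, Finsupp.toMultiset_zero]
    simp
  | single_add φ n u hφ hn ih =>
    rw [Aexp_add, Aexp_single, Finsupp.toMultiset_add, Finsupp.toMultiset_single,
      Multiset.map_add, Multiset.count_add, Finsupp.add_apply, ih,
      Multiset.map_nsmul, Multiset.count_nsmul, Finsupp.smul_apply, eexp_apply,
      Multiset.map_singleton, Multiset.count_singleton, smul_eq_mul]
    congr 1
    by_cases h : φ p = q'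
    · rw [if_pos h, if_pos h.symm]
    · rw [if_neg h, if_neg (fun hc => h hc.symm)]

lemma Aexp_eq_cols {u v : (P →o Q) →₀ ℕ} (h : Aexp u = Aexp v) :
    ∀ p, (Finsupp.toMultiset u).map (fun φ => φ p)
      = (Finsupp.toMultiset v).map (fun φ => φ p) := by
  classical
  intro p
  apply Multiset.ext.2
  intro q'
  rw [← Aexp_count, ← Aexp_count, h]

/-- products of variables along a multiset -/
noncomputable def mprod (M : Multiset (P →o Q)) : MvPolynomial (P →o Q) K :=
  (M.map X).prod

lemma mprod_add (M N : Multiset (P →o Q)) : mprod K (M + N) = mprod K M * mprod K N := by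
  rw [mprod, mprod, mprod, Multiset.map_add, Multiset.prod_add]

lemma mprod_cons (φ : P →o Q) (M : Multiset (P →o Q)) :
    mprod K (φ ::ₘ M) = X φ * mprod K M := by
  rw [mprod, mprod, Multiset.map_cons, Multiset.prod_cons]

lemma monomial_eq_mprod (u : (P →o Q) →₀ ℕ) :
    monomial u (1 : K) = mprod K (Finsupp.toMultiset u) := by
  induction u using Finsupp.induction with
  | zero =>
    rw [Finsupp.toMultiset_zero, monomial_one_zero, mprod, Multiset.map_zero,
      Multiset.prod_zero]
  | single_add φ n u hφ hn ih =>
    rw [Finsupp.toMultiset_add, mprod_add, ← ih, Finsupp.toMultiset_single]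
    have e : mprod K (n • ({φ} : Multiset (P →o Q))) = X φ ^ n := by
      rw [mprod, Multiset.map_nsmul, Multiset.prod_nsmul, Multiset.map_singleton,
        Multiset.prod_singleton]
    rw [e, X_pow_eq_monomial, monomial_mul, one_mul]

/-- the pair-product identity used for swap binomials -/
lemma pair_prod_eq {a b c d : Q} (p : P)
    (h : ({a, b} : Multiset Q) = {c, d}) :
    (X (p, a) : MvPolynomial (P × Q) K) * X (p, b) = X (p, c) * X (p, d) := by
  have hF : ∀ m : Multiset Q, (m.map (fun q' => (X (p, q') : MvPolynomial (P × Q) K))).prod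
      = (m.map (fun q' => (X (p, q') : MvPolynomial (P × Q) K))).prod := fun _ => rfl
  have h2 := congrArg
    (fun m : Multiset Q => (m.map (fun q' => (X (p, q') : MvPolynomial (P × Q) K))).prod) h
  simpa [Multiset.insert_eq_cons] using h2

lemma swap_binomial_mem_ker {φ ψ α β : P →o Q} (hsw : Swappable φ ψ α β) :
    (X φ * X ψ - X α * X β : MvPolynomial (P →o Q) K) ∈ isotonianIdeal K P Q := by
  rw [isotonianIdeal, RingHom.mem_ker]
  have h1 : ∀ (a b : P →o Q), isotonianMap K P Q (X a * X b)
      = ∏ p : P, (X (p, a p) * X (p, b p) : MvPolynomial (P × Q) K) := by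
    intro a b
    rw [map_mul]
    show (aeval fun φ : P →o Q => ∏ p : P, X (p, φ p)) (X a) *
      (aeval fun φ : P →o Q => ∏ p : P, X (p, φ p)) (X b) = _
    rw [aeval_X, aeval_X, ← Finset.prod_mul_distrib]
  have h2 : isotonianMap K P Q (X φ * X ψ) = isotonianMap K P Q (X α * X β) := by
    rw [h1, h1]
    exact Finset.prod_congr rfl fun p _ => pair_prod_eq K p (hsw p)
  rw [map_sub, h2, sub_self]

lemma swap_binomial_quadratic (φ ψ α β : P →o Q) :
    IsQuadraticBinomial (X φ * X ψ - X α * X β : MvPolynomial (P →o Q) K) := by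
  refine ⟨Finsupp.single φ 1 + Finsupp.single ψ 1, Finsupp.single α 1 + Finsupp.single β 1,
    ?_, ?_, ?_⟩
  · rw [Finsupp.sum_add_index' (fun _ => rfl) (fun _ _ _ => rfl),
      Finsupp.sum_single_index rfl, Finsupp.sum_single_index rfl]
  · rw [Finsupp.sum_add_index' (fun _ => rfl) (fun _ _ _ => rfl),
      Finsupp.sum_single_index rfl, Finsupp.sum_single_index rfl]
  · rw [X_eq_monomial', X_eq_monomial', X_eq_monomial', X_eq_monomial',
      monomial_mul, monomial_mul, one_mul]

lemma stepM_diff_mem {M N : Multiset (P →o Q)} (h : StepM M N) :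
    mprod K M - mprod K N ∈
      Ideal.span {f | f ∈ isotonianIdeal K P Q ∧ IsQuadraticBinomial f} := by
  obtain ⟨φ, ψ, α, β, C, rfl, rfl, hsw⟩ := h
  have e : mprod K (φ ::ₘ ψ ::ₘ C) - mprod K (α ::ₘ β ::ₘ C)
      = (X φ * X ψ - X α * X β) * mprod K C := by
    rw [mprod_cons, mprod_cons, mprod_cons, mprod_cons]
    ring
  rw [e]
  exact Ideal.mul_mem_right _ _ (Ideal.subset_span
    ⟨swap_binomial_mem_ker K hsw, swap_binomial_quadratic K φ ψ α β⟩)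

lemma reachM_diff_mem {M N : Multiset (P →o Q)} (h : Relation.ReflTransGen StepM M N) :
    mprod K M - mprod K N ∈
      Ideal.span {f | f ∈ isotonianIdeal K P Q ∧ IsQuadraticBinomial f} := by
  induction h with
  | refl => rw [sub_self]; exact Ideal.zero_mem _
  | tail _ hstep ih =>
    rename_i b c _
    have e : mprod K M - mprod K c = (mprod K M - mprod K b) + (mprod K b - mprod K c) := by
      ring
    rw [e]
    exact Ideal.add_mem _ ih (stepM_diff_mem K hstep)

/-- Part 2 : binomials with equal exponent images lie in the span of quadrics -/
lemma binomial_mem_span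
    (hQ : ∀ m : ℕ, 3 ≤ m → ∀ q : ℕ → Q, IsPosetCycle m q → IsProperPosetCycle m q →
      HasChord m q)
    (hmin : ∃ p₀ : P, ∀ x : P, p₀ ≤ x)
    (hroot : ∀ a b c : P, a ≤ c → b ≤ c → a ≤ b ∨ b ≤ a)
    {u v : (P →o Q) →₀ ℕ} (h : Aexp u = Aexp v) :
    (monomial u 1 - monomial v 1 : MvPolynomial (P →o Q) K) ∈
      Ideal.span {f | f ∈ isotonianIdeal K P Q ∧ IsQuadraticBinomial f} := by
  rw [monomial_eq_mprod, monomial_eq_mprod]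
  exact reachM_diff_mem K
    (multisetConnect hQ hmin hroot _ _ (Aexp_eq_cols h))

end Algebra


/-- If `P` is rooted and every proper poset cycle in `Q` of length `≥ 6` admits a chord,
then `J_{P,Q}` is generated by quadratic binomials. -/
theorem statement14 (K P Q : Type) [Field K] [PartialOrder P] [Fintype P]
    [PartialOrder Q] [Fintype Q]
    (hmin : ∃ p₀ : P, ∀ x : P, p₀ ≤ x)
    (hroot : ∀ a b c : P, a ≤ c → b ≤ c → a ≤ b ∨ b ≤ a)
    (hQ : ∀ m : ℕ, 3 ≤ m → ∀ q : ℕ → Q, IsPosetCycle m q → IsProperPosetCycle m q →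
      HasChord m q) :
    isotonianIdeal K P Q =
      Ideal.span {f | f ∈ isotonianIdeal K P Q ∧ IsQuadraticBinomial f} := by
  classical
  apply le_antisymm
  · -- the hard inclusion
    intro f hf
    have hf0 : isotonianMap K P Q f = 0 := by
      rw [isotonianIdeal, RingHom.mem_ker] at hf
      exact hf
    -- a representative of every fiber
    set rep : (P × Q →₀ ℕ) → ((P →o Q) →₀ ℕ) := fun w =>
      if h : ∃ u ∈ f.support, Aexp u = w then h.choose else 0 with hrepdef
    have hrep : ∀ u ∈ f.support, Aexp (rep (Aexp u)) = Aexp u := by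
      intro u hu
      have hex : ∃ u' ∈ f.support, Aexp u' = Aexp u := ⟨u, hu, rfl⟩
      rw [hrepdef]
      simp only [dif_pos hex]
      exact hex.choose_spec.2
    -- fiberwise coefficient sums vanish
    have hΦf : isotonianMap K P Q f = ∑ u ∈ f.support, monomial (Aexp u) (coeff u f) := by
      conv_lhs => rw [as_sum f]
      rw [map_sum]
      exact Finset.sum_congr rfl fun u _ => Phi_monomial_c K u (coeff u f)
    have hfiber : ∀ w : P × Q →₀ ℕ,
        (∑ u ∈ f.support.filter fun u => Aexp u = w, coeff u f) = 0 := by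
      intro w
      have h1 : coeff w (isotonianMap K P Q f) = 0 := by rw [hf0, coeff_zero]
      rw [hΦf, coeff_sum] at h1
      have h2 : ∀ u ∈ f.support,
          coeff w (monomial (Aexp u) (coeff u f)) = if Aexp u = w then coeff u f else 0 :=
        fun u _ => coeff_monomial w (Aexp u) (coeff u f)
      rw [Finset.sum_congr rfl h2] at h1
      rw [Finset.sum_filter]
      exact h1
    -- the subtracted representative sum is zero
    have hT : (∑ u ∈ f.support, monomial (rep (Aexp u)) (coeff u f)) = 0 := by
      have hfil : f.support.filter (fun u => Aexp u ∈ f.support.image Aexp) = f.support :=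
        Finset.filter_true_of_mem fun u hu => Finset.mem_image_of_mem _ hu
      rw [← hfil, ← Finset.sum_fiberwise_eq_sum_filter f.support (f.support.image Aexp) Aexp
        (fun u => monomial (rep (Aexp u)) (coeff u f))]
      apply Finset.sum_eq_zero
      intro w _
      have h3 : ∀ u ∈ f.support.filter fun u => Aexp u = w,
          monomial (rep (Aexp u)) (coeff u f) = monomial (rep w) (coeff u f) := by
        intro u hu
        rw [(Finset.mem_filter.1 hu).2]
      rw [Finset.sum_congr rfl h3, ← map_sum (monomial (rep w)), hfiber w, map_zero]
    have hdecomp : f = ∑ u ∈ f.support,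
        (monomial u (coeff u f) - monomial (rep (Aexp u)) (coeff u f)) := by
      rw [Finset.sum_sub_distrib, hT, sub_zero]
      exact as_sum f
    rw [hdecomp]
    apply Ideal.sum_mem
    intro u hu
    have e : (monomial u (coeff u f) - monomial (rep (Aexp u)) (coeff u f)
        : MvPolynomial (P →o Q) K)
        = C (coeff u f) * (monomial u 1 - monomial (rep (Aexp u)) 1) := by
      rw [mul_sub, C_mul_monomial, C_mul_monomial, mul_one]
    rw [e]
    exact Ideal.mul_mem_left _ _
      (binomial_mem_span K hQ hmin hroot (hrep u hu).symm)
  · rw [Ideal.span_le]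
    rintro f ⟨hf, _⟩
    exact hf
end Chord
end

section
/- Let P be a rooted finite poset with at least two elements, Q a finite poset, and K a field. If the ideal J_{P,Q} is generated by quadratic binomials, then every proper poset cycle in Q of length ≥ 6 admits a chord. -/
open MvPolynomial

namespace Stmt15

variable {σ : Type} {K : Type} [Field K]

lemma prod_monomial {ι : Type} (s : Finset ι) (g : ι → (σ →₀ ℕ)) :
    (∏ i ∈ s, monomial (g i) (1 : K)) = monomial (∑ i ∈ s, g i) 1 := by
  classical
  induction s using Finset.induction_on with
  | empty => simp
  | insert _ _ h ih =>
      rw [Finset.prod_insert h, Finset.sum_insert h, ih, monomial_mul, one_mul]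

lemma deg_two {v : σ →₀ ℕ} (h : (v.sum fun _ e => e) = 2) :
    (∃ a, v = Finsupp.single a 2) ∨
      ∃ a b, a ≠ b ∧ v = Finsupp.single a 1 + Finsupp.single b 1 := by
  classical
  have hs : ∑ a ∈ v.support, v a = 2 := h
  have hne : v.support.Nonempty := by
    rcases Finset.eq_empty_or_nonempty v.support with h0 | h0
    · rw [h0] at hs; simp at hs
    · exact h0
  obtain ⟨a, ha⟩ := hne
  by_cases hb : ∃ b ∈ v.support, b ≠ a
  · obtain ⟨b, hbs, hba⟩ := hb
    have hsub : ({a, b} : Finset σ) ⊆ v.support := by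
      intro x hx; rcases Finset.mem_insert.1 hx with rfl | hx
      · exact ha
      · rwa [Finset.mem_singleton.1 hx]
    have hpair : v a + v b ≤ 2 := by
      rw [← hs]
      calc v a + v b = ∑ x ∈ ({a, b} : Finset σ), v x := by
            rw [Finset.sum_pair (Ne.symm hba)]
        _ ≤ ∑ x ∈ v.support, v x :=
            Finset.sum_le_sum_of_subset hsub
    have hva : 1 ≤ v a := Nat.one_le_iff_ne_zero.2 (Finsupp.mem_support_iff.1 ha)
    have hvb : 1 ≤ v b := Nat.one_le_iff_ne_zero.2 (Finsupp.mem_support_iff.1 hbs)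
    have hva1 : v a = 1 := by omega
    have hvb1 : v b = 1 := by omega
    have hsupp : v.support = {a, b} := by
      apply Finset.Subset.antisymm _ hsub
      intro c hc
      by_contra hcm
      have hcs : ({a, b, c} : Finset σ) ⊆ v.support := by
        intro x hx
        rcases Finset.mem_insert.1 hx with rfl | hx
        · exact ha
        rcases Finset.mem_insert.1 hx with rfl | hx
        · exact hbs
        · rwa [Finset.mem_singleton.1 hx]
      have hca : c ≠ a := by rintro rfl; exact hcm (by simp)
      have hcb : c ≠ b := by rintro rfl; exact hcm (by simp)
      have h3 : v a + (v b + v c) ≤ 2 := by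
        rw [← hs]
        calc v a + (v b + v c) = ∑ x ∈ ({a, b, c} : Finset σ), v x := by
              rw [Finset.sum_insert (by simp [Ne.symm hba, Ne.symm hca]),
                Finset.sum_pair (Ne.symm hcb)]
          _ ≤ ∑ x ∈ v.support, v x := Finset.sum_le_sum_of_subset hcs
      have hvc : 1 ≤ v c := Nat.one_le_iff_ne_zero.2 (Finsupp.mem_support_iff.1 hc)
      omega
    right
    refine ⟨a, b, Ne.symm hba, ?_⟩
    ext c
    rcases eq_or_ne c a with rfl | hca
    · simp [Finsupp.single_apply, Ne.symm hba, hba, hva1]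
    rcases eq_or_ne c b with rfl | hcb
    · simp [Finsupp.single_apply, hba, Ne.symm hba, hvb1]
    · have : c ∉ v.support := by rw [hsupp]; simp [hca, hcb]
      have hvc : v c = 0 := Finsupp.notMem_support_iff.1 this
      simp [Finsupp.single_apply, Ne.symm hca, Ne.symm hcb, hvc]
  · push_neg at hb
    left
    refine ⟨a, ?_⟩
    have hva : v a = 2 := by
      rw [← hs]
      rw [Finset.eq_singleton_iff_unique_mem.2 ⟨ha, hb⟩]
      simp
    ext c
    rcases eq_or_ne c a with rfl | hca
    · simp [hva]
    · have : v c = 0 := by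
        by_contra hc
        exact hca (hb c (Finsupp.mem_support_iff.2 hc))
      simp [Finsupp.single_apply, Ne.symm hca, this]

def Rel (Pr : (σ →₀ ℕ) → (σ →₀ ℕ) → Prop) (d d' : σ →₀ ℕ) : Prop :=
  ∃ e u v, Pr u v ∧ d = e + u ∧ d' = e + v

lemma rel_symm (Pr : (σ →₀ ℕ) → (σ →₀ ℕ) → Prop)
    (hsymm : ∀ u v, Pr u v → Pr v u) :
    ∀ d d', Rel Pr d d' → Rel Pr d' d := by
  rintro d d' ⟨e, u, v, hP, rfl, rfl⟩
  exact ⟨e, v, u, hsymm u v hP, rfl, rfl⟩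

lemma connect (Pr : (σ →₀ ℕ) → (σ →₀ ℕ) → Prop) (d d' : σ →₀ ℕ)
    (h : (monomial d 1 - monomial d' 1 : MvPolynomial σ K) ∈
      Ideal.span {f : MvPolynomial σ K | ∃ u v, Pr u v ∧ f = monomial u 1 - monomial v 1}) :
    Relation.EqvGen (Rel Pr) d d' := by
  classical
  set r := Rel Pr with hr
  let L : MvPolynomial σ K →ₗ[K] (Quot r →₀ K) := Finsupp.lmapDomain K K (Quot.mk r) ∘ₗ
    (AddMonoidAlgebra.coeffLinearEquiv K).toLinearMap
  have hmon : ∀ (e : σ →₀ ℕ) (c : K), L (monomial e c) = Finsupp.single (Quot.mk r e) c := by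
    intro e c
    show Finsupp.mapDomain (Quot.mk r) (AddMonoidAlgebra.coeff (monomial e c)) = _
    rw [← MvPolynomial.single_eq_monomial, AddMonoidAlgebra.coeff_single, Finsupp.mapDomain_single]
  have hgen : ∀ (f : MvPolynomial σ K) (u v : σ →₀ ℕ), Pr u v →
      L (f * (monomial u 1 - monomial v 1)) = 0 := by
    intro f u v hPr
    induction f using MvPolynomial.induction_on' with
    | monomial e c =>
        rw [mul_sub, monomial_mul, monomial_mul, mul_one, map_sub, hmon, hmon]
        have : Quot.mk r (e + u) = Quot.mk r (e + v) :=
          Quot.sound ⟨e, u, v, hPr, rfl, rfl⟩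
        rw [this, sub_self]
    | add p q hp hq => rw [add_mul, map_add, hp, hq, add_zero]
  have hker : ∀ x ∈ Ideal.span {f : MvPolynomial σ K |
      ∃ u v, Pr u v ∧ f = monomial u 1 - monomial v 1}, ∀ g : MvPolynomial σ K,
      L (g * x) = 0 := by
    intro x hx
    refine Submodule.span_induction ?_ ?_ ?_ ?_ hx
    · rintro f ⟨u, v, hPr, rfl⟩ g
      exact hgen g u v hPr
    · intro g; rw [mul_zero, map_zero]
    · intro x y _ _ hx hy g
      rw [mul_add, map_add, hx, hy, add_zero]
    · intro a x _ hx g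
      rw [smul_eq_mul, ← mul_assoc]
      exact hx (g * a)
  have hL : L (monomial d 1 - monomial d' 1) = 0 := by
    have := hker _ h 1
    rwa [one_mul] at this
  rw [map_sub, hmon, hmon, sub_eq_zero] at hL
  have : Quot.mk r d = Quot.mk r d' :=
    Finsupp.single_left_injective (one_ne_zero (α := K)) hL
  exact Quot.eqvGen_exact this

lemma isolated {α : Type} {r : α → α → Prop} (hsym : ∀ a b, r a b → r b a)
    {M : α} (hM : ∀ x, r M x → x = M) :
    ∀ x, Relation.EqvGen r M x → x = M := by
  have H : ∀ x y, Relation.EqvGen r x y → (x = M → y = M) ∧ (y = M → x = M) := by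
    intro x y h
    induction h with
    | rel a b hab =>
        exact ⟨fun ha => hM b (ha ▸ hab), fun hb => hM a (by rw [hb] at hab; exact hsym a M hab)⟩
    | refl a => exact ⟨id, id⟩
    | symm a b _ ih => exact ⟨ih.2, ih.1⟩
    | trans a b c _ _ ih1 ih2 => exact ⟨fun ha => ih2.1 (ih1.1 ha), fun hc => ih1.2 (ih2.2 hc)⟩
  intro x hx
  exact (H M x hx).1 rfl

end Stmt15


/-- If `P` is rooted with at least two elements and `J_{P,Q}` is generated by quadratic
binomials, then every proper poset cycle in `Q` of length `≥ 6` admits a chord. -/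
theorem statement15 (K P Q : Type) [Field K] [PartialOrder P] [Fintype P]
    [PartialOrder Q] [Fintype Q]
    (hmin : ∃ p₀ : P, ∀ x : P, p₀ ≤ x)
    (hroot : ∀ a b c : P, a ≤ c → b ≤ c → a ≤ b ∨ b ≤ a)
    (hP : ∃ a b : P, a ≠ b)
    (hJ : isotonianIdeal K P Q =
      Ideal.span {f | f ∈ isotonianIdeal K P Q ∧ IsQuadraticBinomial f}) :
    ∀ m : ℕ, 3 ≤ m → ∀ q : ℕ → Q, IsPosetCycle m q → IsProperPosetCycle m q →
      HasChord m q := by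
  classical
  intro m hm q hcyc hproper
  by_contra hnc
  obtain ⟨p₀, hp₀⟩ := hmin
  have hm0 : 0 < m := by omega
  obtain ⟨pa, pb, hpab⟩ := hP
  obtain ⟨p₁, hp₁⟩ : ∃ p₁ : P, p₁ ≠ p₀ := by
    rcases eq_or_ne pa p₀ with rfl | h
    · exact ⟨pb, fun h' => hpab h'.symm⟩
    · exact ⟨pa, h⟩
  obtain ⟨hq, -, -⟩ := hproper
  set e : ℕ → Q := fun i => q (2 * i) with he
  set o : ℕ → Q := fun i => q (2 * i + 1) with ho
  have heinj : ∀ i < m, ∀ j < m, e i = e j → i = j := by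
    intro i hi j hj hij
    by_contra hne
    exact hq (2*i) (by omega) (2*j) (by omega) (by omega) hij
  have hoinj : ∀ i < m, ∀ j < m, o i = o j → i = j := by
    intro i hi j hj hij
    by_contra hne
    exact hq (2*i+1) (by omega) (2*j+1) (by omega) (by omega) hij
  have key : ∀ i < m, (2*i + 2*m - 1) % (2*m) = 2 * ((i + m - 1) % m) + 1 := by
    intro i hi
    rcases Nat.eq_zero_or_pos i with rfl | h1
    · rw [show 2*0+2*m-1 = 2*m-1 by omega, Nat.mod_eq_of_lt (by omega),
        show 0+m-1 = m-1 by omega, Nat.mod_eq_of_lt (by omega)]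
      omega
    · rw [show 2*i+2*m-1 = (2*i-1) + 2*m by omega, Nat.add_mod_right,
        Nat.mod_eq_of_lt (by omega),
        show i+m-1 = (i-1)+m by omega, Nat.add_mod_right,
        Nat.mod_eq_of_lt (by omega)]
      omega
  have hsp : ∀ a < m, ((a + m - 1) % m + 1) % m = a := by
    intro a ha
    rw [Nat.mod_add_mod, show a + m - 1 + 1 = a + m by omega, Nat.add_mod_right,
      Nat.mod_eq_of_lt ha]
  have hps : ∀ a < m, ((a + 1) % m + m - 1) % m = a := by
    intro a ha
    rw [show (a+1) % m + m - 1 = (a+1) % m + (m-1) by omega, Nat.mod_add_mod,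
      show a + 1 + (m - 1) = a + m by omega, Nat.add_mod_right, Nat.mod_eq_of_lt ha]
  have hprpr : ∀ i < m, ((i + m - 1) % m + m - 1) % m ≠ i := by
    intro i hi
    rw [show (i + m - 1) % m + m - 1 = (i + m - 1) % m + (m-1) by omega, Nat.mod_add_mod,
      show i + m - 1 + (m-1) = i + 2*m - 2 by omega]
    rcases le_or_gt 2 i with h2 | h2
    · rw [show i + 2*m - 2 = i - 2 + m + m by omega, Nat.add_mod_right, Nat.add_mod_right,
        Nat.mod_eq_of_lt (by omega)]
      omega
    · rw [show i + 2*m - 2 = (i + m - 2) + m by omega, Nat.add_mod_right,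
        Nat.mod_eq_of_lt (by omega)]
      omega
  have hnochord : ∀ i < m, ∀ j < m, e i ≤ o j → j = i ∨ j = (i + m - 1) % m := by
    intro i hi j hj hle
    by_contra hcon
    push_neg at hcon
    refine hnc ⟨i, hi, j, hj, hcon.1, ?_, hle⟩
    rw [key i hi]
    have := hcon.2
    omega
  have hmono : ∀ aq bq : Q, aq ≤ bq →
      Monotone (fun p : P => if p = p₀ then aq else bq) := by
    intro aq bq h p p' hpp'
    by_cases hp : p = p₀
    · by_cases hp' : p' = p₀
      · simp [hp, hp']
      · simp only [if_pos hp, if_neg hp']; exact h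
    · have hp' : p' ≠ p₀ := by
        rintro rfl
        exact hp (le_antisymm hpp' (hp₀ p))
      simp only [if_neg hp, if_neg hp']
      exact le_refl _
  have hcm : ∀ i, i % m < m := fun i => Nat.mod_lt i hm0
  set α : ℕ → (P →o Q) := fun i =>
    ⟨fun p => if p = p₀ then e (i % m) else o (i % m),
      hmono _ _ (hcyc (i % m) (hcm i)).1⟩ with hα
  have hβle : ∀ i < m, e i ≤ o ((i + m - 1) % m) := by
    intro i hi
    have h2 := (hcyc i hi).2
    rwa [key i hi] at h2
  set β : ℕ → (P →o Q) := fun i =>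
    ⟨fun p => if p = p₀ then e (i % m) else o ((i % m + m - 1) % m),
      hmono _ _ (hβle (i % m) (hcm i))⟩ with hβ
  have hαp₀ : ∀ i, α i p₀ = e (i % m) := by
    intro i
    show (if p₀ = p₀ then e (i % m) else o (i % m)) = e (i % m)
    rw [if_pos rfl]
  have hαp : ∀ i, ∀ p : P, p ≠ p₀ → α i p = o (i % m) := by
    intro i p hp
    show (if p = p₀ then e (i % m) else o (i % m)) = o (i % m)
    rw [if_neg hp]
  have hβp₀ : ∀ i, β i p₀ = e (i % m) := by
    intro i
    show (if p₀ = p₀ then _ else _) = e (i % m)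
    rw [if_pos rfl]
  have hβp : ∀ i, ∀ p : P, p ≠ p₀ → β i p = o ((i % m + m - 1) % m) := by
    intro i p hp
    show (if p = p₀ then _ else _) = o ((i % m + m - 1) % m)
    rw [if_neg hp]
  have hαp₀' : ∀ i < m, α i p₀ = e i := by
    intro i hi; rw [hαp₀, Nat.mod_eq_of_lt hi]
  have hαp' : ∀ i < m, ∀ p : P, p ≠ p₀ → α i p = o i := by
    intro i hi p hp; rw [hαp i p hp, Nat.mod_eq_of_lt hi]
  have hαinj : ∀ i < m, ∀ j < m, α i = α j → i = j := by
    intro i hi j hj hij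
    have h1 : α i p₀ = α j p₀ := by rw [hij]
    rw [hαp₀' i hi, hαp₀' j hj] at h1
    exact heinj i hi j hj h1
  -- exponent vectors
  set M : (P →o Q) →₀ ℕ := ∑ i ∈ Finset.range m, Finsupp.single (α i) 1 with hM
  set M' : (P →o Q) →₀ ℕ := ∑ i ∈ Finset.range m, Finsupp.single (β i) 1 with hM'
  have hMapply : ∀ φ : P →o Q, M φ = ∑ i ∈ Finset.range m, if α i = φ then 1 else 0 := by
    intro φ
    rw [hM, Finsupp.finset_sum_apply]
    exact Finset.sum_congr rfl fun i _ => Finsupp.single_apply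
  have hM'apply : ∀ φ : P →o Q, M' φ = ∑ i ∈ Finset.range m, if β i = φ then 1 else 0 := by
    intro φ
    rw [hM', Finsupp.finset_sum_apply]
    exact Finset.sum_congr rfl fun i _ => Finsupp.single_apply
  have hMle : ∀ φ : P →o Q, M φ ≤ 1 := by
    intro φ
    have hcard : ((Finset.range m).filter (fun i => α i = φ)).card ≤ 1 := by
      refine Finset.card_le_one.2 ?_
      intro i hi j hj
      simp only [Finset.mem_filter, Finset.mem_range] at hi hj
      exact hαinj i hi.1 j hj.1 (hi.2.trans hj.2.symm)
    rw [hMapply, Finset.sum_boole]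
    exact_mod_cast hcard
  have hMex : ∀ φ : P →o Q, M φ ≠ 0 → ∃ i < m, α i = φ := by
    intro φ h
    rw [hMapply] at h
    obtain ⟨i, hi, hne⟩ := Finset.exists_ne_zero_of_sum_ne_zero h
    refine ⟨i, Finset.mem_range.1 hi, ?_⟩
    by_contra hc
    rw [if_neg hc] at hne
    exact hne rfl
  -- the monomial map computations
  set Evec : (P →o Q) → (P × Q →₀ ℕ) :=
    fun φ => ∑ p : P, Finsupp.single (p, φ p) 1 with hEvecdef
  have hEvec : ∀ (φ : P →o Q) (p : P) (x : Q),
      Evec φ (p, x) = if φ p = x then 1 else 0 := by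
    intro φ p x
    rw [hEvecdef]
    simp only
    rw [Finsupp.finset_sum_apply]
    calc ∑ p' : P, (Finsupp.single (p', φ p') 1) (p, x)
        = ∑ p' : P, if p' = p then (if φ p = x then 1 else 0) else 0 := by
          refine Finset.sum_congr rfl fun p' _ => ?_
          rw [Finsupp.single_apply]
          by_cases hp' : p' = p
          · subst hp'
            by_cases hx : φ p' = x
            · simp [hx]
            · simp [hx, Prod.ext_iff]
          · simp [hp', Prod.ext_iff]
      _ = if φ p = x then 1 else 0 := by
          rw [Finset.sum_ite_eq' Finset.univ p]
          simp
  have hXmon : ∀ φ : P →o Q, (X φ : MvPolynomial (P →o Q) K)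
      = monomial (Finsupp.single φ 1) 1 := by
    intro φ
    rw [← pow_one (X φ : MvPolynomial (P →o Q) K), X_pow_eq_monomial]
  have hΦX : ∀ φ : P →o Q, isotonianMap K P Q (X φ) = monomial (Evec φ) 1 := by
    intro φ
    rw [isotonianMap, aeval_X]
    calc (∏ p : P, (X (p, φ p) : MvPolynomial (P × Q) K))
        = ∏ p : P, monomial (Finsupp.single (p, φ p) 1) 1 := by
          refine Finset.prod_congr rfl fun p _ => ?_
          rw [← pow_one (X (p, φ p) : MvPolynomial (P × Q) K), X_pow_eq_monomial]
      _ = monomial (Evec φ) 1 := Stmt15.prod_monomial _ _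
  have hΦ2 : ∀ φ ψ : P →o Q,
      isotonianMap K P Q (monomial (Finsupp.single φ 1 + Finsupp.single ψ 1) 1)
        = monomial (Evec φ + Evec ψ) 1 := by
    intro φ ψ
    rw [show (monomial (Finsupp.single φ 1 + Finsupp.single ψ 1) (1:K))
        = monomial (Finsupp.single φ 1) 1 * monomial (Finsupp.single ψ 1) 1 by
        rw [monomial_mul, one_mul],
      map_mul, ← hXmon, ← hXmon, hΦX, hΦX, monomial_mul, one_mul]
  have hΦsq : ∀ γ : P →o Q,
      isotonianMap K P Q (monomial (Finsupp.single γ 2) 1)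
        = monomial (Evec γ + Evec γ) 1 := by
    intro γ
    rw [← X_pow_eq_monomial, sq, map_mul, hΦX, monomial_mul, one_mul]
  have hΦprod : ∀ g : ℕ → (P →o Q),
      isotonianMap K P Q (monomial (∑ i ∈ Finset.range m, Finsupp.single (g i) 1) 1)
        = monomial (∑ i ∈ Finset.range m, Evec (g i)) 1 := by
    intro g
    rw [← Stmt15.prod_monomial, map_prod]
    calc (∏ i ∈ Finset.range m, isotonianMap K P Q (monomial (Finsupp.single (g i) 1) 1))
        = ∏ i ∈ Finset.range m, monomial (Evec (g i)) 1 := by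
          refine Finset.prod_congr rfl fun i _ => ?_
          rw [← hXmon, hΦX]
      _ = monomial (∑ i ∈ Finset.range m, Evec (g i)) 1 := Stmt15.prod_monomial _ _
  -- the key sum equality
  have hEsum : ∑ i ∈ Finset.range m, Evec (α i) = ∑ i ∈ Finset.range m, Evec (β i) := by
    apply Finsupp.ext
    rintro ⟨p, x⟩
    rw [Finsupp.finset_sum_apply, Finsupp.finset_sum_apply]
    by_cases hp : p = p₀
    · subst hp
      refine Finset.sum_congr rfl fun i hi => ?_
      rw [hEvec, hEvec, hαp₀, hβp₀]
    · calc ∑ i ∈ Finset.range m, Evec (α i) (p, x)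
          = ∑ i ∈ Finset.range m, if o i = x then 1 else 0 := by
            refine Finset.sum_congr rfl fun i hi => ?_
            rw [hEvec, hαp i p hp, Nat.mod_eq_of_lt (Finset.mem_range.1 hi)]
        _ = ∑ i ∈ Finset.range m, if o ((i + m - 1) % m) = x then 1 else 0 := by
            refine Finset.sum_nbij' (fun j => (j + 1) % m) (fun j => (j + m - 1) % m)
              ?_ ?_ ?_ ?_ ?_
            · intro a _; exact Finset.mem_range.2 (hcm _)
            · intro a _; exact Finset.mem_range.2 (hcm _)
            · intro a ha; exact hps a (Finset.mem_range.1 ha)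
            · intro a ha; exact hsp a (Finset.mem_range.1 ha)
            · intro a ha
              rw [hps a (Finset.mem_range.1 ha)]
        _ = ∑ i ∈ Finset.range m, Evec (β i) (p, x) := by
            refine Finset.sum_congr rfl fun i hi => ?_
            rw [hEvec, hβp i p hp, Nat.mod_eq_of_lt (Finset.mem_range.1 hi)]
  have hMM'ker : (monomial M 1 - monomial M' 1 : MvPolynomial (P →o Q) K)
      ∈ isotonianIdeal K P Q := by
    rw [isotonianIdeal, RingHom.mem_ker, map_sub, hM, hM', hΦprod, hΦprod, hEsum, sub_self]
  -- M ≠ M'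
  have hMne : M ≠ M' := by
    intro hMeqM'
    have h0 : (1:ℕ) ≤ M (α 0) := by
      rw [hMapply]
      calc (1:ℕ) = if α 0 = α 0 then 1 else 0 := (if_pos rfl).symm
        _ ≤ ∑ i ∈ Finset.range m, if α i = α 0 then 1 else 0 :=
          Finset.single_le_sum (f := fun i => if α i = α 0 then (1:ℕ) else 0)
            (fun i _ => Nat.zero_le _) (Finset.mem_range.2 hm0)
    have hM'0 : M' (α 0) ≠ 0 := by rw [← hMeqM']; omega
    rw [hM'apply] at hM'0
    obtain ⟨j, hjm, hne⟩ := Finset.exists_ne_zero_of_sum_ne_zero hM'0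
    have hj' : j < m := Finset.mem_range.1 hjm
    have hβj : β j = α 0 := by
      by_contra h
      rw [if_neg h] at hne
      exact hne rfl
    have h1 : e (j % m) = e (0 % m) := by
      have := congrArg (fun f : P →o Q => f p₀) hβj
      simpa only [hβp₀, hαp₀] using this
    have hj0 : j = 0 := by
      rw [Nat.mod_eq_of_lt hj', Nat.zero_mod] at h1
      exact heinj j hj' 0 hm0 h1
    subst hj0
    have h2 : o ((0 % m + m - 1) % m) = o (0 % m) := by
      have := congrArg (fun f : P →o Q => f p₁) hβj
      simpa only [hβp 0 p₁ hp₁, hαp 0 p₁ hp₁] using this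
    rw [Nat.zero_mod] at h2
    have h3 : (0 + m - 1) % m = m - 1 := by
      rw [show 0 + m - 1 = m - 1 by omega, Nat.mod_eq_of_lt (by omega)]
    rw [h3] at h2
    have := hoinj (m-1) (by omega) 0 hm0 h2
    omega
  -- the predicate for quadratic binomial moves
  set Pr : ((P →o Q) →₀ ℕ) → ((P →o Q) →₀ ℕ) → Prop := fun u v =>
    (u.sum fun _ e => e) = 2 ∧ (v.sum fun _ e => e) = 2 ∧
      (monomial u 1 - monomial v 1 : MvPolynomial (P →o Q) K) ∈ isotonianIdeal K P Q
    with hPrdef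
  have hset : {f : MvPolynomial (P →o Q) K | f ∈ isotonianIdeal K P Q ∧ IsQuadraticBinomial f}
      = {f : MvPolynomial (P →o Q) K | ∃ u v, Pr u v ∧ f = monomial u 1 - monomial v 1} := by
    ext f
    constructor
    · rintro ⟨hfJ, u, v, hu, hv, rfl⟩
      exact ⟨u, v, ⟨hu, hv, hfJ⟩, rfl⟩
    · rintro ⟨u, v, ⟨hu, hv, hfJ⟩, rfl⟩
      exact ⟨hfJ, u, v, hu, hv, rfl⟩
  have hPrsymm : ∀ u v, Pr u v → Pr v u := by
    rintro u v ⟨hu, hv, hker⟩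
    refine ⟨hv, hu, ?_⟩
    have hneg := (isotonianIdeal K P Q).neg_mem hker
    rwa [neg_sub] at hneg
  -- the isolated point property
  have hiso : ∀ N, Stmt15.Rel Pr M N → N = M := by
    rintro N ⟨ev, u, v, ⟨hu2, hv2, hkeruv⟩, hMd, hNd⟩
    have hule : ∀ φ, u φ ≤ 1 := by
      intro φ
      have h1 : M φ = ev φ + u φ := by rw [hMd, Finsupp.add_apply]
      have := hMle φ
      omega
    rcases Stmt15.deg_two hu2 with ⟨φ, rfl⟩ | ⟨φ, ψ, hφψ, rfl⟩
    · exfalso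
      have := hule φ
      rw [Finsupp.single_eq_same] at this
      omega
    · have hMφ : M φ ≠ 0 := by
        have h1 : M φ = ev φ + (Finsupp.single φ 1 + Finsupp.single ψ 1 : (P →o Q) →₀ ℕ) φ := by
          rw [hMd, Finsupp.add_apply]
        rw [Finsupp.add_apply, Finsupp.single_eq_same] at h1
        omega
      have hMψ : M ψ ≠ 0 := by
        have h1 : M ψ = ev ψ + (Finsupp.single φ 1 + Finsupp.single ψ 1 : (P →o Q) →₀ ℕ) ψ := by
          rw [hMd, Finsupp.add_apply]
        rw [Finsupp.add_apply, Finsupp.single_eq_same] at h1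
        omega
      obtain ⟨i, hi, hαi⟩ := hMex φ hMφ
      obtain ⟨j, hj, hαj⟩ := hMex ψ hMψ
      have hij : i ≠ j := fun h => hφψ (by rw [← hαi, ← hαj, h])
      have hφp₀ : φ p₀ = e i := by rw [← hαi, hαp₀' i hi]
      have hψp₀ : ψ p₀ = e j := by rw [← hαj, hαp₀' j hj]
      have heij : e i ≠ e j := fun h => hij (heinj i hi j hj h)
      have hkeq : isotonianMap K P Q (monomial (Finsupp.single φ 1 + Finsupp.single ψ 1) 1)
          = isotonianMap K P Q (monomial v 1) := by
        rw [isotonianIdeal, RingHom.mem_ker, map_sub, sub_eq_zero] at hkeruv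
        exact hkeruv
      rcases Stmt15.deg_two hv2 with ⟨γ, rfl⟩ | ⟨γ, δ, hγδ, rfl⟩
      · exfalso
        rw [hΦ2, hΦsq] at hkeq
        have hE : Evec φ + Evec ψ = Evec γ + Evec γ :=
          MvPolynomial.monomial_left_injective (one_ne_zero (α := K)) hkeq
        have h1 : (Evec φ + Evec ψ) (p₀, φ p₀) = (Evec γ + Evec γ) (p₀, φ p₀) := by
          rw [hE]
        rw [Finsupp.add_apply, Finsupp.add_apply, hEvec, hEvec, hEvec] at h1
        have hψφ : ψ p₀ ≠ φ p₀ := by rw [hφp₀, hψp₀]; exact fun h => heij h.symm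
        rw [if_pos rfl, if_neg hψφ] at h1
        split_ifs at h1 <;> omega
      · rw [hΦ2, hΦ2] at hkeq
        have hE : Evec φ + Evec ψ = Evec γ + Evec δ :=
          MvPolynomial.monomial_left_injective (one_ne_zero (α := K)) hkeq
        have hcnt : ∀ (p : P) (x : Q),
            ((if φ p = x then 1 else 0) + if ψ p = x then 1 else 0 : ℕ)
              = (if γ p = x then 1 else 0) + if δ p = x then 1 else 0 := by
          intro p x
          have h1 : (Evec φ + Evec ψ) (p, x) = (Evec γ + Evec δ) (p, x) := by rw [hE]
          rwa [Finsupp.add_apply, Finsupp.add_apply, hEvec, hEvec, hEvec, hEvec] at h1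
        have hpair : ∀ p : P, (γ p = φ p ∧ δ p = ψ p) ∨ (γ p = ψ p ∧ δ p = φ p) := by
          intro p
          have hγor : γ p = φ p ∨ γ p = ψ p := by
            by_contra hc
            push_neg at hc
            have h1 := hcnt p (γ p)
            rw [if_neg (fun h => hc.1 h.symm), if_neg (fun h => hc.2 h.symm),
              if_pos rfl] at h1
            omega
          rcases hγor with h | h
          · left
            refine ⟨h, ?_⟩
            have h2 := hcnt p (ψ p)
            rw [h, if_pos rfl] at h2
            by_cases hd : δ p = ψ p
            · exact hd
            · rw [if_neg hd] at h2
              split_ifs at h2 <;> omega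
          · right
            refine ⟨h, ?_⟩
            have h2 := hcnt p (φ p)
            rw [h, if_pos rfl] at h2
            by_cases hd : δ p = φ p
            · exact hd
            · rw [if_neg hd] at h2
              split_ifs at h2 <;> omega
        have claim : ∀ γ' δ' : P →o Q, γ' p₀ = e i → δ' p₀ = e j →
            (∀ p : P, (γ' p = φ p ∧ δ' p = ψ p) ∨ (γ' p = ψ p ∧ δ' p = φ p)) →
            γ' = φ ∧ δ' = ψ := by
          intro γ' δ' hg0 hd0 hpp
          have hkey : ∀ p : P, γ' p = φ p ∧ δ' p = ψ p := by
            intro p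
            rcases eq_or_ne p p₀ with rfl | hp
            · exact ⟨by rw [hg0, hφp₀], by rw [hd0, hψp₀]⟩
            · rcases hpp p with hc | hc
              · exact hc
              · exfalso
                have hφp : φ p = o i := by rw [← hαi, hαp' i hi p hp]
                have hψp : ψ p = o j := by rw [← hαj, hαp' j hj p hp]
                have hle1 : e i ≤ o j := by
                  calc e i = γ' p₀ := hg0.symm
                    _ ≤ γ' p := γ'.monotone (hp₀ p)
                    _ = o j := by rw [hc.1, hψp]
                have hle2 : e j ≤ o i := by
                  calc e j = δ' p₀ := hd0.symm
                    _ ≤ δ' p := δ'.monotone (hp₀ p)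
                    _ = o i := by rw [hc.2, hφp]
                rcases hnochord i hi j hj hle1 with h1 | h1
                · exact hij h1.symm
                · rcases hnochord j hj i hi hle2 with h2 | h2
                  · exact hij h2
                  · refine hprpr i hi ?_
                    rw [← h1]
                    exact h2.symm
          exact ⟨DFunLike.ext _ _ fun p => (hkey p).1, DFunLike.ext _ _ fun p => (hkey p).2⟩
        rcases hpair p₀ with h0 | h0
        · have hc := claim γ δ (by rw [h0.1, hφp₀]) (by rw [h0.2, hψp₀]) hpair
          rw [hNd, hMd, hc.1, hc.2]
        · have hpair' : ∀ p : P, (δ p = φ p ∧ γ p = ψ p) ∨ (δ p = ψ p ∧ γ p = φ p) := by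
            intro p
            rcases hpair p with hc | hc
            · exact Or.inr ⟨hc.2, hc.1⟩
            · exact Or.inl ⟨hc.2, hc.1⟩
          have hc := claim δ γ (by rw [h0.2, hφp₀]) (by rw [h0.1, hψp₀]) hpair'
          rw [hNd, hMd, hc.1, hc.2,
            add_comm (Finsupp.single ψ (1:ℕ)) (Finsupp.single φ 1)]
  -- conclude
  have hspan : (monomial M 1 - monomial M' 1 : MvPolynomial (P →o Q) K) ∈
      Ideal.span {f : MvPolynomial (P →o Q) K |
        ∃ u v, Pr u v ∧ f = monomial u 1 - monomial v 1} := by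
    rw [← hset, ← hJ]
    exact hMM'ker
  have hEq := Stmt15.connect Pr M M' hspan
  exact hMne (Stmt15.isolated (Stmt15.rel_symm Pr hPrsymm) hiso M' hEq).symm
end
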